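/- arXiv:2604.21371 — 6 statements merged into one kernel-verified Lean document; each statement's English description precedes it below -/
import Mathlib

section
/- Let d_x, d_y be positive integers, d = d_x + d_y, δ > 0, L > 0, μ > 0. Let Y ⊆ ℝ^{d_y} be nonempty, convex, and compact, and set Y_δ = {y + v : y ∈ Y, ‖v‖ ≤ δ}. Suppose f : ℝ^{d_x} × ℝ^{d_y} → ℝ satisfies |f(x₁,y₁) − f(x₂,y₂)| ≤ L·(‖x₁−x₂‖² + ‖y₁−y₂‖²)^{1/2} for all x₁,x₂ ∈ ℝ^{d_x} and y₁,y₂ ∈ Y_δ, and that for every x, the map y ↦ f(x,y) is μ-strongly concave on Y_δ. Let f_δ(x,y) = E_{(u,v) ~ Unif(B^d(0,1))}[ f(x+δu, y+δv) ]. Let y*(x) be the unique maximizer of f(x,·) over Y and y*_δ(x) the unique maximizer of f_δ(x,·) over Y. Then for every x ∈ ℝ^{d_x}, ‖y*(x) − y*_δ(x)‖ ≤ 2√(Lδ/μ). -/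
open MeasureTheory Metric Set

noncomputable section

abbrev Euc (n : ℕ) := EuclideanSpace ℝ (Fin n)

/-- The uniform probability distribution on the closed unit ball of `ℝ^n`. -/
def unifBall (n : ℕ) : Measure (Euc n) :=
  (volume (closedBall (0 : Euc n) 1))⁻¹ • volume.restrict (closedBall (0 : Euc n) 1)

/-- The first `dx` coordinates of a point of `ℝ^{dx+dy}`. -/
def fstPart {dx dy : ℕ} (q : Euc (dx + dy)) : Euc dx := WithLp.toLp 2 (fun i => q (Fin.castAdd dy i))

/-- The last `dy` coordinates of a point of `ℝ^{dx+dy}`. -/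
def sndPart {dx dy : ℕ} (q : Euc (dx + dy)) : Euc dy := WithLp.toLp 2 (fun j => q (Fin.natAdd dx j))

/-- The smoothed surrogate `f_δ(x,y) = E_{(u,v) ~ Unif(B^d(0,1))}[f(x + δu, y + δv)]`. -/
def smoothed (dx dy : ℕ) (δ : ℝ) (f : Euc dx → Euc dy → ℝ) (x : Euc dx) (y : Euc dy) : ℝ :=
  ∫ q : Euc (dx + dy), f (x + δ • fstPart q) (y + δ • sndPart q) ∂(unifBall (dx + dy))

/-- The augmented set `Y_δ = {y + v : y ∈ Y, ‖v‖ ≤ δ}`. -/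
def aug {m : ℕ} (Y : Set (Euc m)) (δ : ℝ) : Set (Euc m) :=
  {y' | ∃ y ∈ Y, ∃ v : Euc m, ‖v‖ ≤ δ ∧ y' = y + v}

lemma fstPart_sub {dx dy : ℕ} (q q' : Euc (dx+dy)) :
    fstPart (dx:=dx) (dy:=dy) (q - q') = fstPart q - fstPart q' := by
  ext i; simp [fstPart]

lemma sndPart_sub {dx dy : ℕ} (q q' : Euc (dx+dy)) :
    sndPart (dx:=dx) (dy:=dy) (q - q') = sndPart q - sndPart q' := by
  ext i; simp [sndPart]

lemma norm_sq_split {dx dy : ℕ} (q : Euc (dx + dy)) :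
    ‖fstPart (dx:=dx) (dy:=dy) q‖ ^ 2 + ‖sndPart (dx:=dx) (dy:=dy) q‖ ^ 2 = ‖q‖ ^ 2 := by
  simp only [EuclideanSpace.norm_eq]
  rw [Real.sq_sqrt (by positivity), Real.sq_sqrt (by positivity), Real.sq_sqrt (by positivity)]
  simp only [fstPart, sndPart, PiLp.toLp_apply]
  rw [← Fin.sum_univ_add (f := fun i => ‖q i‖ ^ 2)]

lemma norm_fstPart_le {dx dy : ℕ} (q : Euc (dx + dy)) : ‖fstPart (dx:=dx) (dy:=dy) q‖ ≤ ‖q‖ := by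
  have h := norm_sq_split q
  nlinarith [norm_nonneg (fstPart (dx:=dx) (dy:=dy) q), norm_nonneg (sndPart (dx:=dx) (dy:=dy) q), norm_nonneg q]

lemma norm_sndPart_le {dx dy : ℕ} (q : Euc (dx + dy)) : ‖sndPart (dx:=dx) (dy:=dy) q‖ ≤ ‖q‖ := by
  have h := norm_sq_split q
  nlinarith [norm_nonneg (fstPart (dx:=dx) (dy:=dy) q), norm_nonneg (sndPart (dx:=dx) (dy:=dy) q), norm_nonneg q]

instance unifBall_prob (n : ℕ) : IsProbabilityMeasure (unifBall n) := by
  constructor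
  rw [unifBall, Measure.smul_apply, Measure.restrict_apply_univ, smul_eq_mul]
  exact ENNReal.inv_mul_cancel
    (measure_closedBall_pos volume (0:Euc n) one_pos).ne'
    measure_closedBall_lt_top.ne

lemma mem_aug_of_ball {dx dy : ℕ} {Y : Set (Euc dy)} {δ : ℝ} (hδ : 0 < δ)
    {y : Euc dy} (hy : y ∈ Y) (q : Euc (dx+dy)) (hq : q ∈ closedBall (0:Euc (dx+dy)) 1) :
    y + δ • sndPart q ∈ aug Y δ := by
  refine ⟨y, hy, δ • sndPart q, ?_, rfl⟩
  rw [norm_smul, Real.norm_eq_abs, abs_of_pos hδ]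
  have h1 : ‖sndPart (dx:=dx) (dy:=dy) q‖ ≤ 1 :=
    (norm_sndPart_le q).trans (by simpa using mem_closedBall_zero_iff.mp hq)
  nlinarith

lemma key_dist {dx dy : ℕ} {Y : Set (Euc dy)} {δ L : ℝ} (hδ : 0 < δ) (hL : 0 < L)
    {f : Euc dx → Euc dy → ℝ}
    (hlip : ∀ x₁ x₂ : Euc dx, ∀ y₁ ∈ aug Y δ, ∀ y₂ ∈ aug Y δ,
      |f x₁ y₁ - f x₂ y₂| ≤ L * Real.sqrt (‖x₁ - x₂‖ ^ 2 + ‖y₁ - y₂‖ ^ 2))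
    (x : Euc dx) {y : Euc dy} (hy : y ∈ Y)
    (q q' : Euc (dx+dy)) (hq : q ∈ closedBall (0:Euc (dx+dy)) 1)
    (hq' : q' ∈ closedBall (0:Euc (dx+dy)) 1) :
    |f (x + δ • fstPart q) (y + δ • sndPart q) - f (x + δ • fstPart q') (y + δ • sndPart q')|
      ≤ L * δ * ‖q - q'‖ := by
  have h := hlip (x + δ • fstPart q) (x + δ • fstPart q') _
    (mem_aug_of_ball hδ hy q hq) _ (mem_aug_of_ball hδ hy q' hq')
  have e1 : (x + δ • fstPart q) - (x + δ • fstPart q') = δ • fstPart (q - q') := by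
    rw [add_sub_add_left_eq_sub, fstPart_sub, smul_sub]
  have e2 : (y + δ • sndPart q) - (y + δ • sndPart q') = δ • sndPart (q - q') := by
    rw [add_sub_add_left_eq_sub, sndPart_sub, smul_sub]
  rw [e1, e2] at h
  have e3 : ‖δ • fstPart (dx:=dx) (dy:=dy) (q - q')‖ ^ 2 + ‖δ • sndPart (dx:=dx) (dy:=dy) (q - q')‖ ^ 2
      = (δ * ‖q - q'‖) ^ 2 := by
    rw [norm_smul, norm_smul, Real.norm_eq_abs, abs_of_pos hδ, mul_pow, mul_pow, mul_pow,
      ← mul_add, norm_sq_split]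
  rw [e3, Real.sqrt_sq (by positivity)] at h
  calc _ ≤ _ := h
  _ = L * δ * ‖q - q'‖ := by ring

lemma integrable_aux {dx dy : ℕ} {Y : Set (Euc dy)} {δ L : ℝ} (hδ : 0 < δ) (hL : 0 < L)
    {f : Euc dx → Euc dy → ℝ}
    (hlip : ∀ x₁ x₂ : Euc dx, ∀ y₁ ∈ aug Y δ, ∀ y₂ ∈ aug Y δ,
      |f x₁ y₁ - f x₂ y₂| ≤ L * Real.sqrt (‖x₁ - x₂‖ ^ 2 + ‖y₁ - y₂‖ ^ 2))
    (x : Euc dx) {y : Euc dy} (hy : y ∈ Y) :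
    Integrable (fun q : Euc (dx+dy) => f (x + δ • fstPart q) (y + δ • sndPart q))
      (unifBall (dx+dy)) := by
  have hlipOn : LipschitzOnWith (L*δ).toNNReal
      (fun q : Euc (dx+dy) => f (x + δ • fstPart q) (y + δ • sndPart q))
      (closedBall (0:Euc (dx+dy)) 1) := by
    apply LipschitzOnWith.of_dist_le_mul
    intro q hq q' hq'
    rw [Real.dist_eq, dist_eq_norm, Real.coe_toNNReal _ (by positivity)]
    exact key_dist hδ hL hlip x hy q q' hq hq'
  have hint : IntegrableOn (fun q : Euc (dx+dy) => f (x + δ • fstPart q) (y + δ • sndPart q))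
      (closedBall (0:Euc (dx+dy)) 1) volume :=
    hlipOn.continuousOn.integrableOn_compact (isCompact_closedBall _ _)
  rw [unifBall]
  exact hint.smul_measure
    (ENNReal.inv_ne_top.mpr (measure_closedBall_pos volume (0:Euc (dx+dy)) one_pos).ne')

lemma ae_ball {n : ℕ} {p : Euc n → Prop} (h : ∀ q ∈ closedBall (0:Euc n) 1, p q) :
    ∀ᵐ q ∂(unifBall n), p q := by
  rw [unifBall, Measure.ae_ennreal_smul_measure_iff (ENNReal.inv_ne_zero.mpr measure_closedBall_lt_top.ne),
    ae_restrict_iff' measurableSet_closedBall]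
  exact ae_of_all _ h

lemma smoothed_close {dx dy : ℕ} {Y : Set (Euc dy)} {δ L : ℝ} (hδ : 0 < δ) (hL : 0 < L)
    {f : Euc dx → Euc dy → ℝ}
    (hlip : ∀ x₁ x₂ : Euc dx, ∀ y₁ ∈ aug Y δ, ∀ y₂ ∈ aug Y δ,
      |f x₁ y₁ - f x₂ y₂| ≤ L * Real.sqrt (‖x₁ - x₂‖ ^ 2 + ‖y₁ - y₂‖ ^ 2))
    (x : Euc dx) {y : Euc dy} (hy : y ∈ Y) :
    |smoothed dx dy δ f x y - f x y| ≤ L * δ := by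
  have hint := integrable_aux hδ hL hlip x hy
  have hconst : Integrable (fun _ : Euc (dx+dy) => f x y) (unifBall (dx+dy)) :=
    integrable_const _
  have heq : smoothed dx dy δ f x y - f x y
      = ∫ q, (f (x + δ • fstPart q) (y + δ • sndPart q) - f x y) ∂(unifBall (dx+dy)) := by
    rw [integral_sub hint hconst, integral_const]
    simp [smoothed]
  have hae : ∀ᵐ q ∂(unifBall (dx+dy)),
      ‖f (x + δ • fstPart q) (y + δ • sndPart q) - f x y‖ ≤ L * δ := by
    apply ae_ball
    intro q hq
    have h0 : (0:Euc (dx+dy)) ∈ closedBall (0:Euc (dx+dy)) 1 := mem_closedBall_self zero_le_one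
    have h := key_dist hδ hL hlip x hy q 0 hq h0
    have e0x : fstPart (dx:=dx) (dy:=dy) (0:Euc (dx+dy)) = 0 := by
      ext i; simp [fstPart]
    have e0y : sndPart (dx:=dx) (dy:=dy) (0:Euc (dx+dy)) = 0 := by
      ext i; simp [sndPart]
    simp only [e0x, e0y, smul_zero, add_zero, sub_zero] at h
    have hq1 : ‖q‖ ≤ 1 := mem_closedBall_zero_iff.mp hq
    rw [Real.norm_eq_abs]
    nlinarith [mul_pos hL hδ, abs_nonneg (f (x + δ • fstPart q) (y + δ • sndPart q) - f x y)]
  have := norm_integral_le_of_norm_le_const hae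
  rw [heq, ← Real.norm_eq_abs]
  simpa using this

lemma smoothed_midconc {dx dy : ℕ} {Y : Set (Euc dy)} {δ L μ : ℝ} (hδ : 0 < δ) (hL : 0 < L)
    {f : Euc dx → Euc dy → ℝ}
    (hlip : ∀ x₁ x₂ : Euc dx, ∀ y₁ ∈ aug Y δ, ∀ y₂ ∈ aug Y δ,
      |f x₁ y₁ - f x₂ y₂| ≤ L * Real.sqrt (‖x₁ - x₂‖ ^ 2 + ‖y₁ - y₂‖ ^ 2))
    (hconc : ∀ x : Euc dx, ∀ y₁ ∈ aug Y δ, ∀ y₂ ∈ aug Y δ, ∀ t ∈ Icc (0 : ℝ) 1,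
      f x (t • y₁ + (1 - t) • y₂) ≥
        t * f x y₁ + (1 - t) * f x y₂ + μ * (t * (1 - t)) / 2 * ‖y₁ - y₂‖ ^ 2)
    (x : Euc dx) {a b : Euc dy} (ha : a ∈ Y) (hb : b ∈ Y)
    (hm : (1/2:ℝ) • a + (1-1/2:ℝ) • b ∈ Y) :
    smoothed dx dy δ f x ((1/2:ℝ) • a + (1-1/2:ℝ) • b) ≥
      (1/2) * smoothed dx dy δ f x a + (1-1/2) * smoothed dx dy δ f x b
        + μ * ((1/2) * (1-1/2)) / 2 * ‖a - b‖ ^ 2 := by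
  set m := (1/2:ℝ) • a + (1-1/2:ℝ) • b with hmdef
  have hia := integrable_aux hδ hL hlip x ha
  have hib := integrable_aux hδ hL hlip x hb
  have him := integrable_aux hδ hL hlip x hm
  have hirhs : Integrable (fun q : Euc (dx+dy) =>
      (1/2:ℝ) * f (x + δ • fstPart q) (a + δ • sndPart q)
      + (1-1/2:ℝ) * f (x + δ • fstPart q) (b + δ • sndPart q)
      + μ * ((1/2) * (1-1/2)) / 2 * ‖a - b‖ ^ 2) (unifBall (dx+dy)) := by
    exact ((hia.const_mul _).add (hib.const_mul _)).add (integrable_const _)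
  have hae : ∀ᵐ q ∂(unifBall (dx+dy)),
      (1/2:ℝ) * f (x + δ • fstPart q) (a + δ • sndPart q)
      + (1-1/2:ℝ) * f (x + δ • fstPart q) (b + δ • sndPart q)
      + μ * ((1/2) * (1-1/2)) / 2 * ‖a - b‖ ^ 2
      ≤ f (x + δ • fstPart q) (m + δ • sndPart q) := by
    apply ae_ball
    intro q hq
    have hsplit : m + δ • sndPart q
        = (1/2:ℝ) • (a + δ • sndPart q) + (1-1/2:ℝ) • (b + δ • sndPart q) := by
      rw [hmdef]
      module
    have hdn : (a + δ • sndPart q) - (b + δ • sndPart q) = a - b := by abel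
    have h := hconc (x + δ • fstPart q) _ (mem_aug_of_ball hδ ha q hq) _
      (mem_aug_of_ball hδ hb q hq) (1/2) ⟨by norm_num, by norm_num⟩
    rw [hdn] at h
    rw [hsplit]
    linarith [h]
  have := integral_mono_ae hirhs him hae
  have hexp : ∫ q, ((1/2:ℝ) * f (x + δ • fstPart q) (a + δ • sndPart q)
      + (1-1/2:ℝ) * f (x + δ • fstPart q) (b + δ • sndPart q)
      + μ * ((1/2) * (1-1/2)) / 2 * ‖a - b‖ ^ 2) ∂(unifBall (dx+dy))
      = (1/2) * smoothed dx dy δ f x a + (1-1/2) * smoothed dx dy δ f x b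
        + μ * ((1/2) * (1-1/2)) / 2 * ‖a - b‖ ^ 2 := by
    have hI1 : Integrable (fun q : Euc (dx+dy) =>
        (1/2:ℝ) * f (x + δ • fstPart q) (a + δ • sndPart q)
        + (1-1/2:ℝ) * f (x + δ • fstPart q) (b + δ • sndPart q)) (unifBall (dx+dy)) := by
      exact (hia.const_mul _).add (hib.const_mul _)
    have hI2 : Integrable (fun q : Euc (dx+dy) =>
        (1/2:ℝ) * f (x + δ • fstPart q) (a + δ • sndPart q)) (unifBall (dx+dy)) := by
      exact hia.const_mul _
    have hI3 : Integrable (fun q : Euc (dx+dy) =>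
        (1-1/2:ℝ) * f (x + δ • fstPart q) (b + δ • sndPart q)) (unifBall (dx+dy)) := by
      exact hib.const_mul _
    rw [integral_add hI1 (integrable_const _), integral_add hI2 hI3,
      integral_const_mul, integral_const_mul, integral_const]
    simp [smoothed]
  rw [hexp] at this
  exact this

/-- if `f` is `L`-Lipschitz on `ℝ^{d_x} × Y_δ` and `μ`-strongly concave in `y`
on `Y_δ`, and `y*(x)` and `y*_δ(x)` are the maximizers over `Y` of `f(x,·)` and of the
uniform-ball smoothing `f_δ(x,·)` respectively, then `‖y*(x) − y*_δ(x)‖ ≤ 2√(Lδ/μ)`. -/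
theorem dist_maximizer_smoothed_maximizer (dx dy : ℕ) (hdx : 0 < dx) (hdy : 0 < dy)
    (δ L μ : ℝ) (hδ : 0 < δ) (hL : 0 < L) (hμ : 0 < μ)
    (Y : Set (Euc dy)) (hYne : Y.Nonempty) (hYconv : Convex ℝ Y) (hYcpt : IsCompact Y)
    (f : Euc dx → Euc dy → ℝ)
    (hlip : ∀ x₁ x₂ : Euc dx, ∀ y₁ ∈ aug Y δ, ∀ y₂ ∈ aug Y δ,
      |f x₁ y₁ - f x₂ y₂| ≤ L * Real.sqrt (‖x₁ - x₂‖ ^ 2 + ‖y₁ - y₂‖ ^ 2))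
    (hconc : ∀ x : Euc dx, ∀ y₁ ∈ aug Y δ, ∀ y₂ ∈ aug Y δ, ∀ t ∈ Icc (0 : ℝ) 1,
      f x (t • y₁ + (1 - t) • y₂) ≥
        t * f x y₁ + (1 - t) * f x y₂ + μ * (t * (1 - t)) / 2 * ‖y₁ - y₂‖ ^ 2)
    (ystar ystarδ : Euc dx → Euc dy)
    (hystar : ∀ x, ystar x ∈ Y ∧ ∀ y ∈ Y, f x y ≤ f x (ystar x))
    (hystarδ : ∀ x, ystarδ x ∈ Y ∧
      ∀ y ∈ Y, smoothed dx dy δ f x y ≤ smoothed dx dy δ f x (ystarδ x)) :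
    ∀ x : Euc dx, ‖ystar x - ystarδ x‖ ≤ 2 * Real.sqrt (L * δ / μ) := by
  intro x
  obtain ⟨haY, hamax⟩ := hystar x
  obtain ⟨hbY, hbmax⟩ := hystarδ x
  set a := ystar x
  set b := ystarδ x
  have hsubY : ∀ y ∈ Y, y ∈ aug Y δ := fun y hy => ⟨y, hy, 0, by simp [hδ.le], by simp⟩
  have hmY : (1/2:ℝ) • a + (1-1/2:ℝ) • b ∈ Y :=
    hYconv haY hbY (by norm_num) (by norm_num) (by norm_num)
  have h1 := hconc x a (hsubY a haY) b (hsubY b hbY) (1/2) ⟨by norm_num, by norm_num⟩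
  have h1' : f x ((1/2:ℝ) • a + (1-1/2:ℝ) • b) ≤ f x a := hamax _ hmY
  have h2 := smoothed_midconc hδ hL hlip hconc x haY hbY hmY
  have h2' : smoothed dx dy δ f x ((1/2:ℝ) • a + (1-1/2:ℝ) • b) ≤ smoothed dx dy δ f x b :=
    hbmax _ hmY
  have hca := abs_le.mp (smoothed_close hδ hL hlip x haY)
  have hcb := abs_le.mp (smoothed_close hδ hL hlip x hbY)
  have hS : μ * ‖a - b‖ ^ 2 ≤ 4 * (L * δ) := by
    linarith [h1, h1', h2, h2', hca.1, hca.2, hcb.1, hcb.2]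
  have hS' : ‖a - b‖ ^ 2 ≤ 4 * (L * δ / μ) := by
    rw [show (4:ℝ) * (L * δ / μ) = 4 * (L * δ) / μ by ring, le_div_iff₀ hμ]
    nlinarith [hS]
  have h2s : 2 * Real.sqrt (L * δ / μ) = Real.sqrt (4 * (L * δ / μ)) := by
    rw [show (4:ℝ) * (L * δ / μ) = (2:ℝ)^2 * (L * δ / μ) by ring,
      Real.sqrt_mul (by positivity), Real.sqrt_sq (by norm_num)]
  rw [h2s]
  calc ‖a - b‖ = Real.sqrt (‖a - b‖ ^ 2) := (Real.sqrt_sq (norm_nonneg _)).symm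
  _ ≤ _ := Real.sqrt_le_sqrt hS'
end
end

section
/- Let X ⊆ ℝ^{d_x} be nonempty, convex, and closed, and let Y ⊆ ℝ^{d_y} be nonempty, convex, and compact. Let g : ℝ^{d_x} × ℝ^{d_y} → ℝ be continuously differentiable with M-Lipschitz gradient (M > 0), and suppose for every x the map y ↦ g(x,y) is μ-strongly concave on Y (μ > 0). Let y*(x) denote the unique maximizer of g(x,·) over Y and Ψ(x) = g(x, y*(x)). Then Ψ is differentiable with ∇Ψ(x) = ∇_x g(x, y*(x)), and for all x ∈ X, y ∈ Y, η_x > 0 and η̃_y ∈ (0, 1/M]: ‖G_X(x, ∇_x g(x,y), η_x)‖ ≤ ‖G_X(x, ∇Ψ(x), η_x)‖ + (2M/μ)·‖G_Y(y, ∇_y g(x,y), η̃_y)‖, where G_X(x, u, η) = (x − Π_X(x − η u))/η and G_Y(y, v, η) = (Π_Y(y + η v) − y)/η. -/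
open Metric Set

noncomputable section

/-- Gradient mapping for the minimization variable: `G_X(x, u, η) = (x − Π_X(x − ηu))/η`. -/
def gradMapX {n : ℕ} (projX : Euc n → Euc n) (x u : Euc n) (η : ℝ) : Euc n :=
  η⁻¹ • (x - projX (x - η • u))

/-- Gradient mapping for the maximization variable: `G_Y(y, v, η) = (Π_Y(y + ηv) − y)/η`. -/
def gradMapY {m : ℕ} (projY : Euc m → Euc m) (y v : Euc m) (η : ℝ) : Euc m :=
  η⁻¹ • (projY (y + η • v) - y)

section AuxLemmas

open Filter Topology

lemma proj_vi {n : ℕ} {C : Set (Euc n)} (hC : Convex ℝ C)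
    {p : Euc n → Euc n} (hp : ∀ z, p z ∈ C ∧ ∀ w ∈ C, ‖z - p z‖ ≤ ‖z - w‖)
    (z : Euc n) {w : Euc n} (hw : w ∈ C) : (inner ℝ (z - p z) (w - p z) : ℝ) ≤ 0 := by
  haveI : Nonempty C := ⟨⟨p z, (hp z).1⟩⟩
  have h1 : ‖z - p z‖ = ⨅ w : C, ‖z - w‖ := by
    refine le_antisymm (le_ciInf fun w => (hp z).2 w w.2)
      (ciInf_le ⟨0, fun _ ⟨_, h⟩ => h ▸ norm_nonneg _⟩ (⟨p z, (hp z).1⟩ : C))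
  exact (norm_eq_iInf_iff_real_inner_le_zero hC (hp z).1).mp h1 w hw

lemma proj_nonexp {n : ℕ} {C : Set (Euc n)} (hC : Convex ℝ C)
    {p : Euc n → Euc n} (hp : ∀ z, p z ∈ C ∧ ∀ w ∈ C, ‖z - p z‖ ≤ ‖z - w‖)
    (a b : Euc n) : ‖p a - p b‖ ≤ ‖a - b‖ := by
  have h1 := proj_vi hC hp a (hp b).1
  have h2 := proj_vi hC hp b (hp a).1
  have key : ‖p a - p b‖ ^ 2 ≤ (inner ℝ (a - b) (p a - p b) : ℝ) := by
    have e : (inner ℝ (p a - p b) (p a - p b) : ℝ) = ‖p a - p b‖ ^ 2 :=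
      real_inner_self_eq_norm_sq _
    simp only [inner_sub_left, inner_sub_right] at h1 h2 e ⊢
    linarith [real_inner_comm (a : Euc n) (p b), real_inner_comm (a : Euc n) (p a),
      real_inner_comm (b : Euc n) (p a), real_inner_comm (b : Euc n) (p b),
      real_inner_comm (p a : Euc n) (p b)]
  have hcs : (inner ℝ (a - b) (p a - p b) : ℝ) ≤ ‖a - b‖ * ‖p a - p b‖ := real_inner_le_norm _ _
  rcases (norm_nonneg (p a - p b)).eq_or_lt with h | h
  · rw [← h]; exact norm_nonneg _
  · have : ‖p a - p b‖ * ‖p a - p b‖ ≤ ‖a - b‖ * ‖p a - p b‖ := by nlinarith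
    exact le_of_mul_le_mul_right this h

variable {dx dy : ℕ} {Y : Set (Euc dy)} {μ : ℝ}
  {g : Euc dx → Euc dy → ℝ} {gy : Euc dx → Euc dy → Euc dy}

lemma dirderiv (hgy : ∀ x y, HasGradientAt (fun y' => g x y') (gy x y) y)
    (x : Euc dx) (y₁ y₂ : Euc dy) :
    HasDerivAt (fun t : ℝ => g x (y₁ + t • (y₂ - y₁))) (inner ℝ (gy x y₁) (y₂ - y₁) : ℝ) 0 := by
  have hc : HasDerivAt (fun t : ℝ => y₁ + t • (y₂ - y₁)) (y₂ - y₁) 0 := by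
    simpa using ((hasDerivAt_id (0 : ℝ)).smul_const (y₂ - y₁)).const_add y₁
  have hpt : y₁ + (0 : ℝ) • (y₂ - y₁) = y₁ := by simp
  have hg := (hgy x y₁).hasFDerivAt
  rw [← hpt] at hg
  simpa [InnerProductSpace.toDual_apply_apply, Function.comp_def] using hg.comp_hasDerivAt 0 hc

lemma strongFO (hgy : ∀ x y, HasGradientAt (fun y' => g x y') (gy x y) y)
    (hconc : ∀ x : Euc dx, ∀ y₁ ∈ Y, ∀ y₂ ∈ Y, ∀ t ∈ Icc (0 : ℝ) 1,
      g x (t • y₁ + (1 - t) • y₂) ≥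
        t * g x y₁ + (1 - t) * g x y₂ + μ * (t * (1 - t)) / 2 * ‖y₁ - y₂‖ ^ 2)
    (x : Euc dx) {y₁ y₂ : Euc dy} (h₁ : y₁ ∈ Y) (h₂ : y₂ ∈ Y) :
    g x y₂ - g x y₁ + μ / 2 * ‖y₂ - y₁‖ ^ 2 ≤ (inner ℝ (gy x y₁) (y₂ - y₁) : ℝ) := by
  have hd := dirderiv hgy x y₁ y₂
  rw [hasDerivAt_iff_tendsto_slope] at hd
  have hd' : Tendsto (slope (fun t : ℝ => g x (y₁ + t • (y₂ - y₁))) 0) (𝓝[>] 0)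
      (𝓝 (inner ℝ (gy x y₁) (y₂ - y₁) : ℝ)) :=
    hd.mono_left (nhdsWithin_mono 0 fun t ht => ne_of_gt ht)
  have hrhs : Tendsto (fun t : ℝ => (g x y₂ - g x y₁) + μ * (1 - t) / 2 * ‖y₂ - y₁‖ ^ 2)
      (𝓝[>] 0) (𝓝 ((g x y₂ - g x y₁) + μ / 2 * ‖y₂ - y₁‖ ^ 2)) := by
    have hco : ContinuousAt (fun t : ℝ =>
        (g x y₂ - g x y₁) + μ * (1 - t) / 2 * ‖y₂ - y₁‖ ^ 2) 0 := by fun_prop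
    have := hco.continuousWithinAt (s := Ioi (0 : ℝ))
    unfold ContinuousWithinAt at this
    convert this using 2
    norm_num
  refine le_of_tendsto_of_tendsto hrhs hd' ?_
  filter_upwards [Ioc_mem_nhdsGT_of_mem (Set.left_mem_Ico.mpr zero_lt_one)] with t ht
  have hcc := hconc x y₂ h₂ y₁ h₁ t ⟨le_of_lt ht.1, ht.2⟩
  have hpt : t • y₂ + (1 - t) • y₁ = y₁ + t • (y₂ - y₁) := by module
  rw [hpt] at hcc
  have hpt0 : y₁ + (0 : ℝ) • (y₂ - y₁) = y₁ := by simp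
  have hslope : slope (fun t : ℝ => g x (y₁ + t • (y₂ - y₁))) 0 t
      = (g x (y₁ + t • (y₂ - y₁)) - g x y₁) / t := by
    rw [slope_def_field]; rw [hpt0]; ring_nf
  rw [hslope, le_div_iff₀ ht.1]
  have hn : ‖y₂ - y₁‖ = ‖y₁ - y₂‖ := norm_sub_rev _ _
  nlinarith [hcc]

lemma optVI (hgy : ∀ x y, HasGradientAt (fun y' => g x y') (gy x y) y)
    (hYconv : Convex ℝ Y) {ystar : Euc dx → Euc dy}
    (hystar : ∀ x, ystar x ∈ Y ∧ ∀ y ∈ Y, g x y ≤ g x (ystar x))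
    (x : Euc dx) {w : Euc dy} (hw : w ∈ Y) :
    (inner ℝ (gy x (ystar x)) (w - ystar x) : ℝ) ≤ 0 := by
  have hd := dirderiv hgy x (ystar x) w
  rw [hasDerivAt_iff_tendsto_slope] at hd
  have hd' : Tendsto (slope (fun t : ℝ => g x (ystar x + t • (w - ystar x))) 0) (𝓝[>] 0)
      (𝓝 (inner ℝ (gy x (ystar x)) (w - ystar x) : ℝ)) :=
    hd.mono_left (nhdsWithin_mono 0 fun t ht => ne_of_gt ht)
  refine le_of_tendsto hd' ?_
  filter_upwards [Ioc_mem_nhdsGT_of_mem (Set.left_mem_Ico.mpr zero_lt_one)] with t ht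
  have hmem : ystar x + t • (w - ystar x) ∈ Y := by
    have hmem' : t • w + (1 - t) • ystar x ∈ Y :=
      hYconv hw (hystar x).1 ht.1.le (by linarith [ht.2]) (by ring)
    rwa [show t • w + (1 - t) • ystar x = ystar x + t • (w - ystar x) by module] at hmem'
  have hle := (hystar x).2 _ hmem
  have hpt0 : ystar x + (0 : ℝ) • (w - ystar x) = ystar x := by simp
  have hslope : slope (fun t : ℝ => g x (ystar x + t • (w - ystar x))) 0 t
      = (g x (ystar x + t • (w - ystar x)) - g x (ystar x)) / t := by
    rw [slope_def_field]; rw [hpt0]; ring_nf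
  rw [hslope]
  exact div_nonpos_of_nonpos_of_nonneg (by linarith) (le_of_lt ht.1)

lemma comp_le {a b c : ℝ} (ha : 0 ≤ a) (hb : 0 ≤ b) (h : Real.sqrt (a ^ 2 + b ^ 2) ≤ c) :
    a ≤ c ∧ b ≤ c := by
  constructor
  · exact le_trans ((Real.le_sqrt ha (by positivity)).mpr (by nlinarith)) h
  · exact le_trans ((Real.le_sqrt hb (by positivity)).mpr (by nlinarith)) h

end AuxLemmas

set_option maxHeartbeats 1000000 in
/-- for a smooth minimax problem with `M`-Lipschitz gradient and `μ`-strongly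
concave maximization variable, the primal function `Ψ(x) = g(x, y*(x))` is differentiable with
`∇Ψ(x) = ∇_x g(x, y*(x))` (Danskin), and the gradient mappings satisfy
`‖G_X(x, ∇_x g(x,y), η_x)‖ ≤ ‖G_X(x, ∇Ψ(x), η_x)‖ + (2M/μ)‖G_Y(y, ∇_y g(x,y), η̃_y)‖`. -/
theorem danskin_gradient_mapping (dx dy : ℕ)
    (X : Set (Euc dx)) (hXne : X.Nonempty) (hXconv : Convex ℝ X) (hXcl : IsClosed X)
    (Y : Set (Euc dy)) (hYne : Y.Nonempty) (hYconv : Convex ℝ Y) (hYcpt : IsCompact Y)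
    (M μ : ℝ) (hM : 0 < M) (hμ : 0 < μ)
    (g : Euc dx → Euc dy → ℝ)
    (gx : Euc dx → Euc dy → Euc dx) (gy : Euc dx → Euc dy → Euc dy)
    (hgx : ∀ x y, HasGradientAt (fun x' => g x' y) (gx x y) x)
    (hgy : ∀ x y, HasGradientAt (fun y' => g x y') (gy x y) y)
    (hgradcont : Continuous fun p : Euc dx × Euc dy => (gx p.1 p.2, gy p.1 p.2))
    (hgradlip : ∀ x₁ x₂ : Euc dx, ∀ y₁ y₂ : Euc dy,
      Real.sqrt (‖gx x₁ y₁ - gx x₂ y₂‖ ^ 2 + ‖gy x₁ y₁ - gy x₂ y₂‖ ^ 2)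
        ≤ M * Real.sqrt (‖x₁ - x₂‖ ^ 2 + ‖y₁ - y₂‖ ^ 2))
    (hconc : ∀ x : Euc dx, ∀ y₁ ∈ Y, ∀ y₂ ∈ Y, ∀ t ∈ Icc (0 : ℝ) 1,
      g x (t • y₁ + (1 - t) • y₂) ≥
        t * g x y₁ + (1 - t) * g x y₂ + μ * (t * (1 - t)) / 2 * ‖y₁ - y₂‖ ^ 2)
    (ystar : Euc dx → Euc dy)
    (hystar : ∀ x, ystar x ∈ Y ∧ ∀ y ∈ Y, g x y ≤ g x (ystar x))
    (projX : Euc dx → Euc dx)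
    (hprojX : ∀ z, projX z ∈ X ∧ ∀ w ∈ X, ‖z - projX z‖ ≤ ‖z - w‖)
    (projY : Euc dy → Euc dy)
    (hprojY : ∀ z, projY z ∈ Y ∧ ∀ w ∈ Y, ‖z - projY z‖ ≤ ‖z - w‖) :
    (∀ x : Euc dx, HasGradientAt (fun x' => g x' (ystar x')) (gx x (ystar x)) x) ∧
    (∀ x ∈ X, ∀ y ∈ Y, ∀ ηx : ℝ, 0 < ηx → ∀ ηy ∈ Ioc (0 : ℝ) (1 / M),
      ‖gradMapX projX x (gx x y) ηx‖ ≤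
        ‖gradMapX projX x (gx x (ystar x)) ηx‖ +
          2 * M / μ * ‖gradMapY projY y (gy x y) ηy‖) := by
  -- componentwise Lipschitz bounds
  have sqrtY : ∀ y₁ y₂ : Euc dy, Real.sqrt (‖(0 : Euc dx) - 0‖ ^ 2 + ‖y₁ - y₂‖ ^ 2) = ‖y₁ - y₂‖ := by
    intro y₁ y₂; simp [Real.sqrt_sq (norm_nonneg _)]
  have hgxLipY : ∀ (x : Euc dx) (y₁ y₂ : Euc dy), ‖gx x y₁ - gx x y₂‖ ≤ M * ‖y₁ - y₂‖ := by
    intro x y₁ y₂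
    have h := hgradlip x x y₁ y₂
    rw [show x - x = (0 : Euc dx) - 0 by abel, sqrtY y₁ y₂] at h
    exact (comp_le (norm_nonneg _) (norm_nonneg _) h).1
  have hgyLipY : ∀ (x : Euc dx) (y₁ y₂ : Euc dy), ‖gy x y₁ - gy x y₂‖ ≤ M * ‖y₁ - y₂‖ := by
    intro x y₁ y₂
    have h := hgradlip x x y₁ y₂
    rw [show x - x = (0 : Euc dx) - 0 by abel, sqrtY y₁ y₂] at h
    exact (comp_le (norm_nonneg _) (norm_nonneg _) h).2
  have sqrtX : ∀ x₁ x₂ : Euc dx, ∀ y : Euc dy,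
      Real.sqrt (‖x₁ - x₂‖ ^ 2 + ‖y - y‖ ^ 2) = ‖x₁ - x₂‖ := by
    intro x₁ x₂ y; simp [Real.sqrt_sq (norm_nonneg _)]
  have hgxLipX : ∀ (x₁ x₂ : Euc dx) (y : Euc dy), ‖gx x₁ y - gx x₂ y‖ ≤ M * ‖x₁ - x₂‖ := by
    intro x₁ x₂ y
    have h := hgradlip x₁ x₂ y y
    rw [sqrtX x₁ x₂ y] at h
    exact (comp_le (norm_nonneg _) (norm_nonneg _) h).1
  have hgyLipX : ∀ (x₁ x₂ : Euc dx) (y : Euc dy), ‖gy x₁ y - gy x₂ y‖ ≤ M * ‖x₁ - x₂‖ := by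
    intro x₁ x₂ y
    have h := hgradlip x₁ x₂ y y
    rw [sqrtX x₁ x₂ y] at h
    exact (comp_le (norm_nonneg _) (norm_nonneg _) h).2
  -- strong monotonicity
  have strongMono : ∀ x : Euc dx, ∀ y₁ ∈ Y, ∀ y₂ ∈ Y,
      μ * ‖y₂ - y₁‖ ^ 2 ≤ (inner ℝ (gy x y₁) (y₂ - y₁) : ℝ) - (inner ℝ (gy x y₂) (y₂ - y₁) : ℝ) := by
    intro x y₁ h₁ y₂ h₂
    have s1 := strongFO hgy hconc x h₁ h₂
    have s2 := strongFO hgy hconc x h₂ h₁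
    have e1 : (inner ℝ (gy x y₂) (y₁ - y₂) : ℝ) = -(inner ℝ (gy x y₂) (y₂ - y₁) : ℝ) := by
      rw [show y₁ - y₂ = -(y₂ - y₁) by abel, inner_neg_right]
    have hn : ‖y₁ - y₂‖ = ‖y₂ - y₁‖ := norm_sub_rev _ _
    rw [e1, hn] at s2
    linarith
  -- Lipschitz continuity of ystar
  have ystarLip : ∀ x₁ x₂ : Euc dx, μ * ‖ystar x₁ - ystar x₂‖ ≤ M * ‖x₁ - x₂‖ := by
    intro x₁ x₂
    have hm := strongMono x₁ (ystar x₂) (hystar x₂).1 (ystar x₁) (hystar x₁).1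
    have o1 := optVI hgy hYconv hystar x₁ (hystar x₂).1
    have o2 := optVI hgy hYconv hystar x₂ (hystar x₁).1
    have e1 : (inner ℝ (gy x₁ (ystar x₁)) (ystar x₂ - ystar x₁) : ℝ)
        = -(inner ℝ (gy x₁ (ystar x₁)) (ystar x₁ - ystar x₂) : ℝ) := by
      rw [show ystar x₂ - ystar x₁ = -(ystar x₁ - ystar x₂) by abel, inner_neg_right]
    rw [e1] at o1
    have key : μ * ‖ystar x₁ - ystar x₂‖ ^ 2
        ≤ (inner ℝ (gy x₁ (ystar x₂) - gy x₂ (ystar x₂)) (ystar x₁ - ystar x₂) : ℝ) := by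
      rw [inner_sub_left]
      linarith
    have hcs := real_inner_le_norm (gy x₁ (ystar x₂) - gy x₂ (ystar x₂)) (ystar x₁ - ystar x₂)
    have hlip := hgyLipX x₁ x₂ (ystar x₂)
    rcases (norm_nonneg (ystar x₁ - ystar x₂)).eq_or_lt with h | h
    · rw [← h, mul_zero]; positivity
    · have hmul : μ * ‖ystar x₁ - ystar x₂‖ * ‖ystar x₁ - ystar x₂‖
          ≤ M * ‖x₁ - x₂‖ * ‖ystar x₁ - ystar x₂‖ := by nlinarith
      exact le_of_mul_le_mul_right hmul h
  -- quadratic upper bound in x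
  have descentX : ∀ (x x' : Euc dx) (y : Euc dy),
      |g x' y - g x y - (inner ℝ (gx x y) (x' - x) : ℝ)| ≤ M * ‖x' - x‖ ^ 2 := by
    intro x x' y
    have hmain := (convex_closedBall x ‖x' - x‖).norm_image_sub_le_of_norm_hasFDerivWithin_le'
      (f := fun z => g z y) (f' := fun z => InnerProductSpace.toDual ℝ (Euc dx) (gx z y))
      (φ := InnerProductSpace.toDual ℝ (Euc dx) (gx x y)) (C := M * ‖x' - x‖)
      (fun z _ => ((hgx z y).hasFDerivAt).hasFDerivWithinAt)
      (fun z hz => by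
        rw [show (InnerProductSpace.toDual ℝ (Euc dx)) (gx z y)
            - (InnerProductSpace.toDual ℝ (Euc dx)) (gx x y)
            = (InnerProductSpace.toDual ℝ (Euc dx)) (gx z y - gx x y) from (map_sub _ _ _).symm]
        rw [LinearIsometryEquiv.norm_map]
        have hz' : ‖z - x‖ ≤ ‖x' - x‖ := by
          rw [← dist_eq_norm]; exact mem_closedBall.mp hz
        exact le_trans (hgxLipX z x y) (mul_le_mul_of_nonneg_left hz' hM.le))
      (mem_closedBall_self (norm_nonneg _))
      (show x' ∈ closedBall x ‖x' - x‖ from by simp [mem_closedBall, dist_eq_norm])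
    rw [InnerProductSpace.toDual_apply_apply] at hmain
    rw [Real.norm_eq_abs] at hmain
    calc |g x' y - g x y - (inner ℝ (gx x y) (x' - x) : ℝ)| ≤ M * ‖x' - x‖ * ‖x' - x‖ := hmain
      _ = M * ‖x' - x‖ ^ 2 := by ring
  -- Danskin
  have danskin : ∀ x : Euc dx, HasGradientAt (fun x' => g x' (ystar x')) (gx x (ystar x)) x := by
    intro x
    have key : ∀ x' : Euc dx,
        |g x' (ystar x') - g x (ystar x) - (inner ℝ (gx x (ystar x)) (x' - x) : ℝ)|
          ≤ (M + M * (M / μ)) * ‖x' - x‖ ^ 2 := by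
      intro x'
      have d0 := descentX x x' (ystar x)
      have d1 := descentX x x' (ystar x')
      have low : g x' (ystar x) ≤ g x' (ystar x') := (hystar x').2 _ (hystar x).1
      have upp : g x (ystar x') ≤ g x (ystar x) := (hystar x).2 _ (hystar x').1
      have hgd : |(inner ℝ (gx x (ystar x')) (x' - x) : ℝ)
          - (inner ℝ (gx x (ystar x)) (x' - x) : ℝ)| ≤ M * (M / μ) * ‖x' - x‖ ^ 2 := by
        rw [← inner_sub_left]
        have hcs := abs_real_inner_le_norm (gx x (ystar x') - gx x (ystar x)) (x' - x)
        have h1 := hgxLipY x (ystar x') (ystar x)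
        have h2 := ystarLip x' x
        have h3 : ‖ystar x' - ystar x‖ ≤ M / μ * ‖x' - x‖ := by
          rw [div_mul_eq_mul_div, le_div_iff₀ hμ]
          calc ‖ystar x' - ystar x‖ * μ = μ * ‖ystar x' - ystar x‖ := by ring
            _ ≤ M * ‖x' - x‖ := h2
        have h4 : ‖gx x (ystar x') - gx x (ystar x)‖ ≤ M * (M / μ * ‖x' - x‖) :=
          h1.trans (mul_le_mul_of_nonneg_left h3 hM.le)
        have h5 : ‖gx x (ystar x') - gx x (ystar x)‖ * ‖x' - x‖
            ≤ (M * (M / μ * ‖x' - x‖)) * ‖x' - x‖ :=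
          mul_le_mul_of_nonneg_right h4 (norm_nonneg _)
        calc |(inner ℝ (gx x (ystar x') - gx x (ystar x)) (x' - x) : ℝ)|
            ≤ ‖gx x (ystar x') - gx x (ystar x)‖ * ‖x' - x‖ := hcs
          _ ≤ (M * (M / μ * ‖x' - x‖)) * ‖x' - x‖ := h5
          _ = M * (M / μ) * ‖x' - x‖ ^ 2 := by ring
      obtain ⟨d0l, d0r⟩ := abs_le.mp d0
      obtain ⟨d1l, d1r⟩ := abs_le.mp d1
      obtain ⟨gl, gr⟩ := abs_le.mp hgd
      have hpos : (0 : ℝ) ≤ M * (M / μ) * ‖x' - x‖ ^ 2 := by positivity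
      have hpos2 : (0 : ℝ) ≤ M * ‖x' - x‖ ^ 2 := by positivity
      rw [abs_le]
      constructor
      · linarith
      · linarith
    rw [hasGradientAt_iff_hasFDerivAt]
    refine hasFDerivAt_iff_isLittleO.mpr ?_
    rw [Asymptotics.isLittleO_iff]
    intro c hc
    have hCpos : (0 : ℝ) < M + M * (M / μ) := by positivity
    filter_upwards [Metric.ball_mem_nhds x (div_pos hc hCpos)] with x' hx'
    have hk := key x'
    rw [mem_ball, dist_eq_norm] at hx'
    simp only [InnerProductSpace.toDual_apply_apply]
    rw [Real.norm_eq_abs]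
    have hle : (M + M * (M / μ)) * ‖x' - x‖ ^ 2 ≤ c * ‖x' - x‖ := by
      have h1 : (M + M * (M / μ)) * ‖x' - x‖ ≤ (M + M * (M / μ)) * (c / (M + M * (M / μ))) :=
        mul_le_mul_of_nonneg_left hx'.le hCpos.le
      have heq : (M + M * (M / μ)) * (c / (M + M * (M / μ))) = c := by field_simp
      nlinarith [norm_nonneg (x' - x)]
    linarith
  -- distance bound from the gradient mapping in y
  have distY : ∀ x : Euc dx, ∀ y ∈ Y, ∀ η : ℝ, 0 < η → η * M ≤ 1 →
      μ * ‖y - ystar x‖ ≤ 2 * ‖gradMapY projY y (gy x y) η‖ := by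
    intro x y hy η hη hηM
    set y₀ := ystar x with hy₀def
    set v := gy x y with hv
    set v' := gy x y₀ with hv'
    set G := gradMapY projY y v η with hGdef
    have hGeq : η • G = projY (y + η • v) - y := by
      rw [hGdef]; unfold gradMapY; rw [smul_smul, mul_inv_cancel₀ hη.ne', one_smul]
    have hproj_eq : projY (y + η • v) = y + η • G := by
      have := hGeq.symm
      rw [sub_eq_iff_eq_add] at this
      rw [this]; abel
    have hypY : projY (y + η • v) ∈ Y := (hprojY _).1
    have f1 : μ * ‖y₀ - y‖ ^ 2 ≤ (inner ℝ v (y₀ - y) : ℝ) - (inner ℝ v' (y₀ - y) : ℝ) :=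
      strongMono x y hy y₀ (hystar x).1
    -- projection variational inequality
    have hvi := proj_vi hYconv hprojY (y + η • v) (hystar x).1
    have hA : (y + η • v) - projY (y + η • v) = η • v - η • G := by rw [hproj_eq]; abel
    have hB : y₀ - projY (y + η • v) = (y₀ - y) - η • G := by rw [hproj_eq]; abel
    rw [hA, hB] at hvi
    have f2 : (inner ℝ v (y₀ - y) : ℝ)
        ≤ (inner ℝ G (y₀ - y) : ℝ) + η * (inner ℝ v G : ℝ) - η * ‖G‖ ^ 2 := by
      have expand : (inner ℝ (η • v - η • G) ((y₀ - y) - η • G) : ℝ)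
          = η * ((inner ℝ v (y₀ - y) : ℝ) - η * (inner ℝ v G : ℝ)
            - (inner ℝ G (y₀ - y) : ℝ) + η * ‖G‖ ^ 2) := by
        simp only [inner_sub_left, inner_sub_right, real_inner_smul_left, real_inner_smul_right,
          real_inner_self_eq_norm_sq, norm_smul, Real.norm_eq_abs, mul_pow, sq_abs]
        ring
      rw [expand] at hvi
      have hE : (inner ℝ v (y₀ - y) : ℝ) - η * (inner ℝ v G : ℝ)
          - (inner ℝ G (y₀ - y) : ℝ) + η * ‖G‖ ^ 2 ≤ 0 := by
        by_contra hcon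
        push_neg at hcon
        have := mul_pos hη hcon
        linarith
      linarith
    -- optimality of ystar
    have o3 := optVI hgy hYconv hystar x hypY
    have hC : projY (y + η • v) - y₀ = η • G - (y₀ - y) := by rw [hproj_eq]; abel
    rw [hC] at o3
    have f3 : η * (inner ℝ v' G : ℝ) ≤ (inner ℝ v' (y₀ - y) : ℝ) := by
      have expand : (inner ℝ v' (η • G - (y₀ - y)) : ℝ)
          = η * (inner ℝ v' G : ℝ) - (inner ℝ v' (y₀ - y) : ℝ) := by
        simp only [inner_sub_right, real_inner_smul_right]
      rw [expand] at o3
      linarith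
    -- Cauchy–Schwarz pieces
    have hcs1 : (inner ℝ G (y₀ - y) : ℝ) ≤ ‖G‖ * ‖y₀ - y‖ := real_inner_le_norm _ _
    have hcs2 : (inner ℝ (v - v') G : ℝ) ≤ ‖v - v'‖ * ‖G‖ := real_inner_le_norm _ _
    have hlip : ‖v - v'‖ ≤ M * ‖y₀ - y‖ := by
      rw [show ‖y₀ - y‖ = ‖y - y₀‖ from norm_sub_rev _ _]
      exact hgyLipY x y y₀
    have hvsub : η * (inner ℝ (v - v') G : ℝ) = η * (inner ℝ v G : ℝ) - η * (inner ℝ v' G : ℝ) := by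
      rw [inner_sub_left]; ring
    have t1 : η * (inner ℝ (v - v') G : ℝ) ≤ η * (‖v - v'‖ * ‖G‖) :=
      mul_le_mul_of_nonneg_left hcs2 hη.le
    have t2 : η * (‖v - v'‖ * ‖G‖) ≤ η * ((M * ‖y₀ - y‖) * ‖G‖) :=
      mul_le_mul_of_nonneg_left (mul_le_mul_of_nonneg_right hlip (norm_nonneg G)) hη.le
    have t3 : η * ((M * ‖y₀ - y‖) * ‖G‖) = (η * M) * (‖y₀ - y‖ * ‖G‖) := by ring
    have t4 : (η * M) * (‖y₀ - y‖ * ‖G‖) ≤ 1 * (‖y₀ - y‖ * ‖G‖) :=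
      mul_le_mul_of_nonneg_right hηM (by positivity)
    have t5 : (0 : ℝ) ≤ η * ‖G‖ ^ 2 := by positivity
    have main : μ * ‖y₀ - y‖ ^ 2 ≤ 2 * ‖G‖ * ‖y₀ - y‖ := by
      linarith [f1, f2, f3, hvsub, hcs1, t1, t2, t3, t4, t5]
    rw [show ‖y - y₀‖ = ‖y₀ - y‖ from norm_sub_rev _ _]
    rcases (norm_nonneg (y₀ - y)).eq_or_lt with h | h
    · rw [← h, mul_zero]; positivity
    · have hsq : ‖y₀ - y‖ ^ 2 = ‖y₀ - y‖ * ‖y₀ - y‖ := sq ‖y₀ - y‖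
      have hmul : μ * ‖y₀ - y‖ * ‖y₀ - y‖ ≤ 2 * ‖G‖ * ‖y₀ - y‖ := by
        rw [hsq] at main; linarith
      exact le_of_mul_le_mul_right hmul h
  refine ⟨danskin, ?_⟩
  intro x hx y hy ηx hηx ηy hηy
  have hηyM : ηy * M ≤ 1 := by
    rw [← le_div_iff₀ hM]
    exact hηy.2
  have hdist := distY x y hy ηy hηy.1 hηyM
  have hGdiff : ‖gradMapX projX x (gx x y) ηx - gradMapX projX x (gx x (ystar x)) ηx‖
      ≤ ‖gx x y - gx x (ystar x)‖ := by
    unfold gradMapX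
    rw [← smul_sub, norm_smul]
    have e : (x - projX (x - ηx • gx x y)) - (x - projX (x - ηx • gx x (ystar x)))
        = projX (x - ηx • gx x (ystar x)) - projX (x - ηx • gx x y) := by abel
    rw [e]
    have hne := proj_nonexp hXconv hprojX (x - ηx • gx x (ystar x)) (x - ηx • gx x y)
    have e2 : (x - ηx • gx x (ystar x)) - (x - ηx • gx x y) = ηx • (gx x y - gx x (ystar x)) := by
      module
    rw [e2, norm_smul] at hne
    calc ‖ηx⁻¹‖ * ‖projX (x - ηx • gx x (ystar x)) - projX (x - ηx • gx x y)‖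
        ≤ ‖ηx⁻¹‖ * (‖ηx‖ * ‖gx x y - gx x (ystar x)‖) :=
          mul_le_mul_of_nonneg_left hne (norm_nonneg _)
      _ = ‖gx x y - gx x (ystar x)‖ := by
          rw [Real.norm_eq_abs, Real.norm_eq_abs, abs_of_pos hηx, abs_of_pos (inv_pos.mpr hηx)]
          field_simp
  have htri : ‖gradMapX projX x (gx x y) ηx‖ ≤ ‖gradMapX projX x (gx x (ystar x)) ηx‖
      + ‖gradMapX projX x (gx x y) ηx - gradMapX projX x (gx x (ystar x)) ηx‖ := by
    have := norm_add_le (gradMapX projX x (gx x (ystar x)) ηx)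
      (gradMapX projX x (gx x y) ηx - gradMapX projX x (gx x (ystar x)) ηx)
    rw [show gradMapX projX x (gx x (ystar x)) ηx
        + (gradMapX projX x (gx x y) ηx - gradMapX projX x (gx x (ystar x)) ηx)
        = gradMapX projX x (gx x y) ηx by abel] at this
    exact this
  have hlipfin : ‖gx x y - gx x (ystar x)‖ ≤ M * ‖y - ystar x‖ := hgxLipY x y (ystar x)
  have hfin : M * ‖y - ystar x‖ ≤ 2 * M / μ * ‖gradMapY projY y (gy x y) ηy‖ := by
    have h1 : (M / μ) * (μ * ‖y - ystar x‖)
        ≤ (M / μ) * (2 * ‖gradMapY projY y (gy x y) ηy‖) :=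
      mul_le_mul_of_nonneg_left hdist (by positivity)
    have h2 : (M / μ) * (μ * ‖y - ystar x‖) = M * ‖y - ystar x‖ := by field_simp
    have h3 : (M / μ) * (2 * ‖gradMapY projY y (gy x y) ηy‖)
        = 2 * M / μ * ‖gradMapY projY y (gy x y) ηy‖ := by ring
    linarith
  linarith
end
end

section
/- Let Y ⊆ ℝ^m be a nonempty closed convex set and let h : ℝ^m → ℝ be differentiable with M-Lipschitz gradient (M > 0). Fix y ∈ Y and a step size η with 0 < η ≤ 1/M, and let y⁺ = Π_Y(y + η ∇h(y)). Then h(y⁺) − h(y) ≥ (1/η − M/2)·‖y⁺ − y‖², and in particular h(y⁺) − h(y) ≥ (1/(2η))·‖y⁺ − y‖². -/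
set_option maxHeartbeats 800000

open Set
open intervalIntegral RealInnerProductSpace

noncomputable section

lemma descent_lemma {m : ℕ} (M : ℝ) (hM : 0 < M)
    (h : Euc m → ℝ) (h' : Euc m → Euc m)
    (hdiff : ∀ y, HasGradientAt h (h' y) y)
    (hlip : ∀ y₁ y₂ : Euc m, ‖h' y₁ - h' y₂‖ ≤ M * ‖y₁ - y₂‖)
    (y v : Euc m) :
    ⟪h' y, v⟫ - M / 2 * ‖v‖ ^ 2 ≤ h (y + v) - h y := by
  have hcont : Continuous h' := by
    have : LipschitzWith M.toNNReal h' := by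
      apply LipschitzWith.of_dist_le_mul
      intro a b
      simpa [dist_eq_norm, Real.coe_toNNReal _ hM.le] using hlip a b
    exact this.continuous
  have hg : ∀ t : ℝ, HasDerivAt (fun t : ℝ => h (y + t • v)) ⟪h' (y + t • v), v⟫ t := by
    intro t
    have h1 : HasFDerivAt h (InnerProductSpace.toDual ℝ _ (h' (y + t • v))) (y + t • v) :=
      (hdiff _).hasFDerivAt
    have h2 : HasDerivAt (fun t : ℝ => y + t • v) v t := by
      simpa using ((hasDerivAt_id t).smul_const v).const_add y
    have h3 := h1.comp_hasDerivAt t h2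
    simp only [Function.comp_def, InnerProductSpace.toDual_apply_apply] at h3
    exact h3
  have hcont2 : Continuous fun t : ℝ => ⟪h' (y + t • v), v⟫ := by
    exact (Continuous.inner (hcont.comp (by continuity)) continuous_const)
  have hftc : h (y + v) - h y = ∫ t in (0:ℝ)..1, ⟪h' (y + t • v), v⟫ := by
    have := integral_eq_sub_of_hasDerivAt (f := fun t : ℝ => h (y + t • v))
      (fun t _ => hg t) (hcont2.intervalIntegrable 0 1)
    rw [this]
    norm_num
  rw [hftc]
  have hmono : ∫ t in (0:ℝ)..1, (⟪h' y, v⟫ - M * t * ‖v‖ ^ 2) ≤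
      ∫ t in (0:ℝ)..1, ⟪h' (y + t • v), v⟫ := by
    apply integral_mono_on zero_le_one
    · exact (continuous_const.sub ((continuous_const.mul continuous_id').mul
        continuous_const)).intervalIntegrable 0 1
    · exact hcont2.intervalIntegrable 0 1
    · intro t ht
      have h1 : ⟪h' y - h' (y + t • v), v⟫ ≤ M * t * ‖v‖ ^ 2 := by
        calc ⟪h' y - h' (y + t • v), v⟫ ≤ ‖h' y - h' (y + t • v)‖ * ‖v‖ :=
              real_inner_le_norm _ _
          _ ≤ (M * ‖y - (y + t • v)‖) * ‖v‖ :=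
              mul_le_mul_of_nonneg_right (hlip _ _) (norm_nonneg _)
          _ = M * t * ‖v‖ ^ 2 := by
              have : ‖y - (y + t • v)‖ = t * ‖v‖ := by
                simp [norm_smul, abs_of_nonneg ht.1]
              rw [this]; ring
      have h2 : ⟪h' y - h' (y + t • v), v⟫ = ⟪h' y, v⟫ - ⟪h' (y + t • v), v⟫ := by
        rw [inner_sub_left]
      linarith
  refine le_trans (le_of_eq ?_) hmono
  have e1 : (fun t : ℝ => ⟪h' y, v⟫ - M * t * ‖v‖ ^ 2) =
      fun t : ℝ => ⟪h' y, v⟫ - (M * ‖v‖ ^ 2) * t := by ext t; ring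
  rw [e1, intervalIntegral.integral_sub (f := fun _ : ℝ => ⟪h' y, v⟫)
    (g := fun t : ℝ => (M * ‖v‖ ^ 2) * t) (continuous_const.intervalIntegrable 0 1)
    ((continuous_const.mul continuous_id').intervalIntegrable 0 1),
    intervalIntegral.integral_const_mul, integral_id, intervalIntegral.integral_const]
  norm_num
  ring

/-- ascent progress of one projected gradient step on a function with
`M`-Lipschitz gradient: with `y⁺ = Π_Y(y + η∇h(y))` and `0 < η ≤ 1/M`,
`h(y⁺) − h(y) ≥ (1/η − M/2)‖y⁺ − y‖² ≥ (1/(2η))‖y⁺ − y‖²`. -/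
theorem projected_gradient_ascent_progress (m : ℕ)
    (Y : Set (Euc m)) (hYne : Y.Nonempty) (hYcl : IsClosed Y) (hYconv : Convex ℝ Y)
    (M : ℝ) (hM : 0 < M)
    (h : Euc m → ℝ) (h' : Euc m → Euc m)
    (hdiff : ∀ y, HasGradientAt h (h' y) y)
    (hlip : ∀ y₁ y₂ : Euc m, ‖h' y₁ - h' y₂‖ ≤ M * ‖y₁ - y₂‖)
    (projY : Euc m → Euc m)
    (hproj : ∀ z, projY z ∈ Y ∧ ∀ w ∈ Y, ‖z - projY z‖ ≤ ‖z - w‖)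
    (y : Euc m) (hy : y ∈ Y) (η : ℝ) (hη : 0 < η) (hηM : η ≤ 1 / M) :
    (1 / η - M / 2) * ‖projY (y + η • h' y) - y‖ ^ 2 ≤ h (projY (y + η • h' y)) - h y ∧
    (1 / (2 * η)) * ‖projY (y + η • h' y) - y‖ ^ 2 ≤ h (projY (y + η • h' y)) - h y := by
  set u := y + η • h' y with hu
  set p := projY u with hp
  have hpY : p ∈ Y := (hproj u).1
  -- projection variational inequality
  have hVI : ∀ w ∈ Y, ⟪u - p, w - p⟫ ≤ 0 := by
    haveI : Nonempty Y := ⟨⟨p, hpY⟩⟩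
    rw [← norm_eq_iInf_iff_real_inner_le_zero hYconv hpY]
    refine le_antisymm (le_ciInf fun w => (hproj u).2 w w.2) ?_
    have hbdd : BddBelow (Set.range fun w : Y => ‖u - (w : Euc m)‖) := by
      refine ⟨0, ?_⟩
      rintro x ⟨w, rfl⟩
      exact norm_nonneg _
    exact ciInf_le hbdd (⟨p, hpY⟩ : Y)
  have hVIy : ⟪u - p, y - p⟫ ≤ 0 := hVI y hy
  -- from VI: ⟪h' y, p - y⟫ ≥ ‖p - y‖²/η
  have hinner : ‖p - y‖ ^ 2 ≤ η * ⟪h' y, p - y⟫ := by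
    have e : u - p = η • h' y - (p - y) := by rw [hu]; abel
    rw [e, show y - p = -(p - y) by abel] at hVIy
    rw [inner_neg_right, inner_sub_left, real_inner_smul_left,
      real_inner_self_eq_norm_sq] at hVIy
    linarith
  -- descent lemma with v = p - y
  have hdesc := descent_lemma M hM h h' hdiff hlip y (p - y)
  rw [show y + (p - y) = p by abel] at hdesc
  have hkey : (1 / η - M / 2) * ‖p - y‖ ^ 2 ≤ h p - h y := by
    have h1 : (1 / η) * ‖p - y‖ ^ 2 ≤ ⟪h' y, p - y⟫ := by
      rw [div_mul_eq_mul_div, one_mul, div_le_iff₀ hη]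
      linarith [hinner]
    nlinarith [hdesc]
  have hMη : M ≤ 1 / η := by
    rw [le_div_iff₀ hη]
    rw [le_div_iff₀ hM] at hηM
    linarith
  refine ⟨hkey, le_trans ?_ hkey⟩
  have hMη' : M * η ≤ 1 := by
    rw [le_div_iff₀ hM] at hηM
    linarith
  have : (1 / (2 * η)) ≤ 1 / η - M / 2 := by
    have e : 1 / η - M / 2 - 1 / (2 * η) = (1 - M * η) / (2 * η) := by
      field_simp
      ring
    have hnn : (0:ℝ) ≤ (1 - M * η) / (2 * η) :=
      div_nonneg (by linarith) (by linarith)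
    linarith
  nlinarith [sq_nonneg ‖p - y‖, this]
end
end

section
/- Let Y ⊆ ℝ^m be a nonempty convex compact set and let h : ℝ^m → ℝ be differentiable with M-Lipschitz gradient (M > 0). Then for every y ∈ Y and every η with 0 < η ≤ 1/M, the gradient mapping G_Y(y, ∇h(y), η) = (Π_Y(y + η ∇h(y)) − y)/η satisfies ‖G_Y(y, ∇h(y), η)‖² ≤ (2/η)·( max_{y'∈Y} h(y') − h(y) ). -/
open Set

noncomputable section

open scoped RealInnerProductSpace

/-- Descent lemma for `M`-Lipschitz gradient. -/
lemma descent_aux (m : ℕ) (M : ℝ) (hM : 0 ≤ M) (h : Euc m → ℝ) (h' : Euc m → Euc m)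
    (hdiff : ∀ y, HasGradientAt h (h' y) y)
    (hlip : ∀ y₁ y₂ : Euc m, ‖h' y₁ - h' y₂‖ ≤ M * ‖y₁ - y₂‖)
    (x d : Euc m) :
    h x + ⟪h' x, d⟫ - M / 2 * ‖d‖ ^ 2 ≤ h (x + d) := by
  set φ : ℝ → ℝ := fun t => h (x + t • d) - t * ⟪h' x, d⟫ + M / 2 * t ^ 2 * ‖d‖ ^ 2 with hφ
  have hderiv : ∀ t : ℝ, HasDerivAt φ
      (⟪h' (x + t • d), d⟫ - ⟪h' x, d⟫ + M * t * ‖d‖ ^ 2) t := by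
    intro t
    have hγ : HasDerivAt (fun t : ℝ => x + t • d) d t := by
      simpa using ((hasDerivAt_id t).smul_const d).const_add x
    have h1 : HasDerivAt (fun t : ℝ => h (x + t • d)) ⟪h' (x + t • d), d⟫ t := by
      have := ((hdiff (x + t • d)).hasFDerivAt).comp_hasDerivAt t hγ
      simp at this
      exact this
    have h2 : HasDerivAt (fun t : ℝ => t * ⟪h' x, d⟫) ⟪h' x, d⟫ t := by
      simpa using (hasDerivAt_id t).mul_const ⟪h' x, d⟫
    have h3 : HasDerivAt (fun t : ℝ => M / 2 * t ^ 2 * ‖d‖ ^ 2) (M * t * ‖d‖ ^ 2) t := by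
      have := (((hasDerivAt_pow 2 t)).const_mul (M / 2)).mul_const (‖d‖ ^ 2)
      exact this.congr_deriv (by rw [show (2:ℕ) - 1 = 1 from rfl]; push_cast; ring)
    exact (h1.sub h2).add h3
  have hmono : MonotoneOn φ (Icc 0 1) := by
    apply monotoneOn_of_deriv_nonneg (convex_Icc 0 1)
    · exact fun t _ => (hderiv t).differentiableAt.continuousAt.continuousWithinAt
    · intro t ht
      exact (hderiv t).differentiableAt.differentiableWithinAt
    · intro t ht
      rw [(hderiv t).deriv]
      rw [interior_Icc, mem_Ioo] at ht
      have hb : ‖h' (x + t • d) - h' x‖ ≤ M * t * ‖d‖ := by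
        calc ‖h' (x + t • d) - h' x‖ ≤ M * ‖x + t • d - x‖ := hlip _ _
          _ = M * (|t| * ‖d‖) := by rw [add_sub_cancel_left, norm_smul]; simp
          _ = M * t * ‖d‖ := by rw [abs_of_pos ht.1]; ring
      have hi : -(M * t * ‖d‖ ^ 2) ≤ ⟪h' (x + t • d) - h' x, d⟫ := by
        have := abs_real_inner_le_norm (h' (x + t • d) - h' x) d
        have h2 : ‖h' (x + t • d) - h' x‖ * ‖d‖ ≤ M * t * ‖d‖ ^ 2 := by
          calc ‖h' (x + t • d) - h' x‖ * ‖d‖ ≤ M * t * ‖d‖ * ‖d‖ :=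
                mul_le_mul_of_nonneg_right hb (norm_nonneg d)
            _ = M * t * ‖d‖ ^ 2 := by ring
        nlinarith [abs_le.mp this]
      rw [inner_sub_left] at hi
      linarith
  have := hmono (left_mem_Icc.mpr zero_le_one) (right_mem_Icc.mpr zero_le_one) zero_le_one
  simp only [hφ] at this
  simp only [zero_smul, add_zero, zero_mul, one_smul, one_mul, one_pow] at this
  linarith

/-- on a convex compact set `Y`, for `h` with `M`-Lipschitz gradient and
`0 < η ≤ 1/M`, the gradient mapping `G_Y(y, ∇h(y), η) = (Π_Y(y + η∇h(y)) − y)/η` satisfies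
`‖G_Y(y, ∇h(y), η)‖² ≤ (2/η)(max_{y'∈Y} h(y') − h(y))`. -/
theorem gradMap_sq_le_optimality_gap (m : ℕ)
    (Y : Set (Euc m)) (hYne : Y.Nonempty) (hYconv : Convex ℝ Y) (hYcpt : IsCompact Y)
    (M : ℝ) (hM : 0 < M)
    (h : Euc m → ℝ) (h' : Euc m → Euc m)
    (hdiff : ∀ y, HasGradientAt h (h' y) y)
    (hlip : ∀ y₁ y₂ : Euc m, ‖h' y₁ - h' y₂‖ ≤ M * ‖y₁ - y₂‖)
    (projY : Euc m → Euc m)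
    (hproj : ∀ z, projY z ∈ Y ∧ ∀ w ∈ Y, ‖z - projY z‖ ≤ ‖z - w‖) :
    ∀ y ∈ Y, ∀ η : ℝ, 0 < η → η ≤ 1 / M →
      ‖η⁻¹ • (projY (y + η • h' y) - y)‖ ^ 2 ≤ 2 / η * (sSup (h '' Y) - h y) := by
  intro y hy η hη hηM
  set u := y + η • h' y with hu
  set v := projY u with hv
  have hvY : v ∈ Y := (hproj u).1
  haveI : Nonempty Y := hYne.to_subtype
  -- projection variational inequality
  have hVI : ∀ w ∈ Y, ⟪u - v, w - v⟫ ≤ 0 := by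
    rw [← norm_eq_iInf_iff_real_inner_le_zero hYconv hvY]
    apply le_antisymm
    · exact le_ciInf fun w => (hproj u).2 w w.2
    · exact ciInf_le ⟨0, fun _ ⟨_, hh⟩ => hh ▸ norm_nonneg _⟩ (⟨v, hvY⟩ : Y)
  have key : ‖v - y‖ ^ 2 ≤ η * ⟪h' y, v - y⟫ := by
    have e : ⟪u - v, y - v⟫ = -(η * ⟪h' y, v - y⟫) + ‖v - y‖ ^ 2 := by
      rw [hu, show (y + η • h' y) - v = η • h' y - (v - y) by abel,
        show y - v = -(v - y) by abel, inner_neg_right, inner_sub_left,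
        real_inner_smul_left, real_inner_self_eq_norm_sq]
      ring
    linarith [hVI y hy]
  -- descent lemma at y with d = v - y
  have hdesc := descent_aux m M hM.le h h' hdiff hlip y (v - y)
  rw [add_sub_cancel] at hdesc
  -- h v ≥ h y + ‖v-y‖²/(2η)
  have hMη : M ≤ 1 / η := by
    rw [le_div_iff₀ hη]
    calc M * η ≤ M * (1 / M) := by nlinarith
      _ = 1 := by field_simp
  have hge : h y + ‖v - y‖ ^ 2 / (2 * η) ≤ h v := by
    have h1 : ‖v - y‖ ^ 2 / η ≤ ⟪h' y, v - y⟫ := by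
      rw [div_le_iff₀ hη] at *
      nlinarith
    have hMηle : M * η ≤ 1 := (le_div_iff₀ hη).mp hMη
    have h2 : M / 2 * ‖v - y‖ ^ 2 ≤ ‖v - y‖ ^ 2 / (2 * η) := by
      rw [le_div_iff₀ (by positivity : (0:ℝ) < 2 * η)]
      nlinarith [mul_nonneg (sub_nonneg.mpr hMηle) (sq_nonneg ‖v - y‖)]
    have h3 : ‖v - y‖ ^ 2 / η - ‖v - y‖ ^ 2 / (2 * η) = ‖v - y‖ ^ 2 / (2 * η) := by
      field_simp; ring
    linarith
  -- sSup bound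
  have hcont : Continuous h := by
    have : Differentiable ℝ h := fun z => (hdiff z).differentiableAt
    exact this.continuous
  have hbdd : BddAbove (h '' Y) := (hYcpt.image hcont).bddAbove
  have hsup : h v ≤ sSup (h '' Y) := le_csSup hbdd ⟨v, hvY, rfl⟩
  -- conclude
  rw [norm_smul]
  have hnn : (‖η⁻¹‖ * ‖v - y‖) ^ 2 = η⁻¹ ^ 2 * ‖v - y‖ ^ 2 := by
    rw [mul_pow, Real.norm_eq_abs, sq_abs]
  rw [hnn]
  have hfin : η⁻¹ ^ 2 * ‖v - y‖ ^ 2 = 2 / η * (‖v - y‖ ^ 2 / (2 * η)) := by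
    field_simp
  calc η⁻¹ ^ 2 * ‖v - y‖ ^ 2 = 2 / η * (‖v - y‖ ^ 2 / (2 * η)) := hfin
    _ ≤ 2 / η * (sSup (h '' Y) - h y) := by
        apply mul_le_mul_of_nonneg_left _ (by positivity)
        linarith
end
end

section
/- Let n be a positive integer, δ > 0, c ≥ 0, and let h₁, h₂ : ℝ^n → ℝ be Lipschitz continuous functions satisfying |h₁(x) − h₂(x)| ≤ c for all x ∈ ℝ^n. Define the uniform-ball smoothings h_{i,δ}(x) = E_{w ~ Unif(B^n(0,1))}[ h_i(x + δ w) ] for i = 1,2. Then h_{1,δ} and h_{2,δ} are differentiable on ℝ^n and ‖∇h_{1,δ}(x) − ∇h_{2,δ}(x)‖ ≤ n c / δ for every x ∈ ℝ^n. -/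
open MeasureTheory Metric Set
open scoped ENNReal
open scoped NNReal

noncomputable section

/-- The uniform-ball smoothing `h_δ(x) = E_{w ~ Unif(B^n(0,1))}[h(x + δw)]`. -/
def ballSmooth (n : ℕ) (δ : ℝ) (h : Euc n → ℝ) (x : Euc n) : ℝ :=
  ∫ w : Euc n, h (x + δ • w) ∂(unifBall n)

lemma gamma_half_le (k : ℕ) :
    Real.Gamma ((k + 1 : ℝ) / 2) ≤ Real.sqrt Real.pi * Real.Gamma ((k + 2 : ℝ) / 2) := by
  induction k using Nat.twoStepInduction with
  | zero =>
    norm_num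
    first
    | rw [Real.Gamma_one_half_eq]
    | (rw [show (2:ℝ)⁻¹ = 1/2 by norm_num, Real.Gamma_one_half_eq])
  | one =>
    have h32 : ((1:ℕ) + 2 : ℝ) / 2 = 1/2 + 1 := by norm_num
    rw [h32, Real.Gamma_add_one (by norm_num), Real.Gamma_one_half_eq]
    have : ((1:ℕ) + 1 : ℝ) / 2 = 1 := by norm_num
    rw [this, Real.Gamma_one]
    rw [← mul_assoc, mul_comm (Real.sqrt Real.pi) (1/2 : ℝ), mul_assoc,
      Real.mul_self_sqrt Real.pi_pos.le]
    nlinarith [Real.pi_gt_three]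
  | more k ih _ =>
    have hk1 : ((k + 2 : ℕ) + 1 : ℝ) / 2 = (k + 1 : ℝ)/2 + 1 := by push_cast; ring
    have hk2 : ((k + 2 : ℕ) + 2 : ℝ) / 2 = (k + 2 : ℝ)/2 + 1 := by push_cast; ring
    have hp1 : (0:ℝ) < (k + 1 : ℝ)/2 := by positivity
    have hp2 : (0:ℝ) < (k + 2 : ℝ)/2 := by positivity
    rw [hk1, hk2, Real.Gamma_add_one hp1.ne', Real.Gamma_add_one hp2.ne']
    have ih' := ih
    push_cast at ih' ⊢
    calc (k + 1 : ℝ)/2 * Real.Gamma ((k + 1 : ℝ)/2)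
        ≤ (k + 1 : ℝ)/2 * (Real.sqrt Real.pi * Real.Gamma ((k + 2 : ℝ)/2)) := by
          apply mul_le_mul_of_nonneg_left ih' hp1.le
      _ ≤ (k + 2 : ℝ)/2 * (Real.sqrt Real.pi * Real.Gamma ((k + 2 : ℝ)/2)) := by
          apply mul_le_mul_of_nonneg_right (by linarith) ?_
          have := (Real.Gamma_pos_of_pos hp2).le
          positivity
      _ = Real.sqrt Real.pi * ((k + 2 : ℝ)/2 * Real.Gamma ((k + 2 : ℝ)/2)) := by ring

lemma vol0 : volume (closedBall (0 : Euc 0) 1) = 1 := by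
  have h : (closedBall (0 : Euc 0) 1) = univ := by
    apply eq_univ_of_forall
    intro x
    simp [mem_closedBall, Subsingleton.elim x (0 : Euc 0)]
  have h2 : volume (univ : Set (Euc 0)) = volume (univ : Set (Fin 0 → ℝ)) := by
    simpa using (EuclideanSpace.volume_preserving_symm_measurableEquiv_toLp (Fin 0)).measure_preimage
      (MeasurableSet.univ (α := Fin 0 → ℝ)).nullMeasurableSet
  rw [h, h2, MeasureTheory.volume_pi, Measure.pi_univ]
  simp

lemma keyVol (k : ℕ) : (volume (closedBall (0 : Euc (k+1)) 1)).toReal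
    = Real.sqrt Real.pi ^ (k+1) / Real.Gamma (((k:ℝ)+1) / 2 + 1) := by
  rw [EuclideanSpace.volume_closedBall]
  have hΓ : (0:ℝ) < Real.Gamma (((k:ℝ)+1)/2 + 1) := Real.Gamma_pos_of_pos (by positivity)
  have hpos : 0 ≤ Real.sqrt Real.pi ^ (k+1) / Real.Gamma (((k:ℝ)+1)/2 + 1) := by positivity
  simp only [Fintype.card_fin, ENNReal.ofReal_one, one_pow, one_mul]
  rw [show ((k+1 : ℕ) : ℝ) = (k:ℝ)+1 by push_cast; ring]
  exact ENNReal.toReal_ofReal hpos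

lemma two_vol_le (m : ℕ) :
    2 * (volume (closedBall (0 : Euc m) 1)).toReal
      ≤ (m + 1 : ℝ) * (volume (closedBall (0 : Euc (m+1)) 1)).toReal := by
  have hsq : 0 < Real.sqrt Real.pi := Real.sqrt_pos.mpr Real.pi_pos
  match m with
  | 0 =>
    rw [vol0, keyVol 0]
    have h : Real.Gamma (((0:ℕ):ℝ)/2 + 1/2 + 1/2) = 1 := by norm_num [Real.Gamma_one]
    have hG : Real.Gamma (((0:ℕ):ℝ)+1)/2 = 1/2 := by norm_num [Real.Gamma_one]
    have hhalf : Real.Gamma (1/2 : ℝ) = Real.sqrt Real.pi := Real.Gamma_one_half_eq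
    have : Real.Gamma ((((0:ℕ):ℝ)+1)/2 + 1) = Real.sqrt Real.pi / 2 := by
      rw [show ((((0:ℕ):ℝ)+1)/2 + 1) = (1:ℝ)/2 + 1 by norm_num, Real.Gamma_add_one (by norm_num),
        hhalf]
      ring
    rw [this]
    have : Real.sqrt Real.pi ^ (0+1) / (Real.sqrt Real.pi / 2) = 2 := by
      field_simp
      ring
    rw [this]
    norm_num
  | Nat.succ k =>
    rw [keyVol k, keyVol (k+1)]
    have h1 : (0:ℝ) < Real.Gamma (((k:ℝ)+1)/2 + 1) := Real.Gamma_pos_of_pos (by positivity)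
    have h2 : (0:ℝ) < Real.Gamma ((((k+1:ℕ):ℝ)+1)/2 + 1) := Real.Gamma_pos_of_pos (by positivity)
    rw [mul_div_assoc', mul_div_assoc', div_le_div_iff₀ h1 h2]
    have hΓ3 : Real.Gamma ((((k+1:ℕ):ℝ)+1)/2 + 1) = (((k:ℝ)+2)/2) * Real.Gamma (((k:ℝ)+2)/2) := by
      rw [show ((((k+1:ℕ):ℝ)+1)/2 + 1) = ((k:ℝ)+2)/2 + 1 by push_cast; ring,
        Real.Gamma_add_one (by positivity)]
    have hΓ4 : Real.Gamma (((k:ℝ)+1)/2 + 1) = Real.Gamma (((k:ℝ)+3)/2) := by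
      rw [show (((k:ℝ)+1)/2 + 1) = ((k:ℝ)+3)/2 by ring]
    have hgk : Real.Gamma (((k:ℝ)+2)/2) ≤ Real.sqrt Real.pi * Real.Gamma (((k:ℝ)+3)/2) := by
      have := gamma_half_le (k+1); push_cast at this
      calc Real.Gamma (((k:ℝ)+2)/2) = Real.Gamma (((k:ℝ)+1+1)/2) := by ring_nf
        _ ≤ Real.sqrt Real.pi * Real.Gamma (((k:ℝ)+1+2)/2) := this
        _ = Real.sqrt Real.pi * Real.Gamma (((k:ℝ)+3)/2) := by ring_nf
    calc 2 * Real.sqrt Real.pi ^ (k+1) * Real.Gamma ((((k+1:ℕ):ℝ)+1)/2 + 1)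
        = (((k:ℝ)+2) * Real.sqrt Real.pi ^ (k+1)) * Real.Gamma (((k:ℝ)+2)/2) := by
          rw [hΓ3]; ring
      _ ≤ (((k:ℝ)+2) * Real.sqrt Real.pi ^ (k+1)) * (Real.sqrt Real.pi * Real.Gamma (((k:ℝ)+3)/2)) := by
          apply mul_le_mul_of_nonneg_left hgk (by positivity)
      _ = (((k+1:ℕ):ℝ) + 1) * Real.sqrt Real.pi ^ (k+1+1) * Real.Gamma (((k:ℝ)+1)/2 + 1) := by
          rw [hΓ4]; push_cast; ring

lemma sqrt_le_one_iff (s : ℝ) : Real.sqrt s ≤ 1 ↔ s ≤ 1 := by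
  rw [show (1:ℝ) = Real.sqrt 1 by simp]
  rw [Real.sqrt_le_sqrt_iff (by norm_num)]
  simp

lemma mem_ball_iff_sum (m : ℕ) (τ : ℝ) (y : Euc (m+1)) :
    y ∈ closedBall (τ • EuclideanSpace.single (0 : Fin (m+1)) (1:ℝ)) 1
      ↔ (y 0 - τ)^2 + ∑ j : Fin m, (y j.succ)^2 ≤ 1 := by
  have hsum : ∑ i : Fin (m+1), dist (y i) ((τ • EuclideanSpace.single (0 : Fin (m+1)) (1:ℝ)) i)^2
      = (y 0 - τ)^2 + ∑ j : Fin m, (y j.succ)^2 := by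
    rw [Fin.sum_univ_succ]
    congr 1
    · simp [EuclideanSpace.single_apply, Real.dist_eq, sq_abs]
    · apply Finset.sum_congr rfl
      intro j _
      simp [EuclideanSpace.single_apply, (Fin.succ_ne_zero j), Real.dist_eq, sq_abs]
  rw [mem_closedBall, EuclideanSpace.dist_eq, sqrt_le_one_iff, hsum]

/-- The coordinate model of the shifted unit ball in `ℝ × ℝ^m`. -/
def Bset (m : ℕ) (τ : ℝ) : Set (ℝ × (Fin m → ℝ)) :=
  {q | (q.1 - τ)^2 + ∑ j : Fin m, (q.2 j)^2 ≤ 1}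

lemma measurable_Bset (m : ℕ) (τ : ℝ) : MeasurableSet (Bset m τ) := by
  apply measurableSet_le
  · apply Measurable.add
    · exact ((measurable_fst.sub measurable_const).pow_const 2)
    · exact Finset.measurable_sum _ fun j _ => ((measurable_snd.eval).pow_const 2)
  · exact measurable_const

lemma slice_bound (m : ℕ) (τ : ℝ) (hτ : 0 ≤ τ) (z : Fin m → ℝ) :
    volume {t : ℝ | (t, z) ∈ Bset m 0 \ Bset m τ}
      ≤ indicator {z : Fin m → ℝ | ∑ j, (z j)^2 ≤ 1} (fun _ => ENNReal.ofReal τ) z := by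
  set w := ∑ j : Fin m, (z j)^2 with hw
  have hw0 : 0 ≤ w := by positivity
  by_cases hw1 : w ≤ 1
  · rw [indicator_of_mem (by exact hw1)]
    set r := Real.sqrt (1 - w) with hr
    have hr0 : 0 ≤ r := Real.sqrt_nonneg _
    have hr2 : r^2 = 1 - w := Real.sq_sqrt (by linarith)
    have hsub : {t : ℝ | (t, z) ∈ Bset m 0 \ Bset m τ} ⊆ Icc (-r) (τ - r) := by
      intro t ht
      obtain ⟨h1, h2⟩ := ht
      simp only [Bset, mem_setOf_eq, sub_zero] at h1 h2
      have ht2 : t^2 ≤ 1 - w := by linarith [h1]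
      have habs : |t| ≤ r := by
        rw [← Real.sqrt_sq_eq_abs, hr]
        exact Real.sqrt_le_sqrt ht2
      rw [abs_le] at habs
      constructor
      · exact habs.1
      · -- if t > τ - r then (t - τ)^2 ≤ r^2, contradiction
        by_contra hcon
        push_neg at hcon
        apply h2
        have hb1 : -r ≤ t - τ := by linarith [hcon]
        have hb2 : t - τ ≤ r := by linarith [habs.2, hτ]
        have : (t - τ)^2 ≤ r^2 := sq_le_sq' hb1 hb2
        rw [hr2] at this
        linarith
    calc volume {t : ℝ | (t, z) ∈ Bset m 0 \ Bset m τ} ≤ volume (Icc (-r) (τ - r)) :=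
          measure_mono hsub
      _ = ENNReal.ofReal ((τ - r) - (-r)) := Real.volume_Icc
      _ = ENNReal.ofReal τ := by ring_nf
  · have hempty : {t : ℝ | (t, z) ∈ Bset m 0 \ Bset m τ} = ∅ := by
      apply eq_empty_of_forall_notMem
      intro t ht
      obtain ⟨h1, _⟩ := ht
      simp only [Bset, mem_setOf_eq, sub_zero] at h1
      nlinarith [sq_nonneg t]
    rw [hempty]
    simp

lemma vol_coord_ball (m : ℕ) :
    volume {z : Fin m → ℝ | ∑ j, (z j)^2 ≤ 1} = volume (closedBall (0 : Euc m) 1) := by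
  have hpre : ((MeasurableEquiv.toLp 2 (Fin m → ℝ)).symm) ⁻¹' {z : Fin m → ℝ | ∑ j, (z j)^2 ≤ 1}
      = closedBall (0 : Euc m) 1 := by
    ext y
    simp only [mem_preimage, mem_setOf_eq, mem_closedBall]
    rw [EuclideanSpace.dist_eq, sqrt_le_one_iff]
    have h' : ∀ i, ((MeasurableEquiv.toLp 2 (Fin m → ℝ)).symm y) i = y i := fun i => rfl
    simp only [h', PiLp.zero_apply, sub_zero, Real.dist_eq, sq_abs]
  rw [← hpre]
  exact Eq.symm <|
    (EuclideanSpace.volume_preserving_symm_measurableEquiv_toLp (Fin m)).measure_preimage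
    ((measurableSet_le (Finset.measurable_sum Finset.univ
      fun j _ => ((measurable_pi_apply j).pow_const 2)) measurable_const).nullMeasurableSet)

lemma vol_diff_le_single (m : ℕ) (τ : ℝ) (hτ : 0 ≤ τ) :
    volume (closedBall (0 : Euc (m+1)) 1
        \ closedBall (τ • EuclideanSpace.single (0 : Fin (m+1)) (1:ℝ)) 1)
      ≤ ENNReal.ofReal τ * volume (closedBall (0 : Euc m) 1) := by
  set φ := (MeasurableEquiv.toLp 2 (Fin (m+1) → ℝ)).symm with hφ
  set ψ := MeasurableEquiv.piFinSuccAbove (fun _ : Fin (m+1) => ℝ) 0 with hψ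
  set D := Bset m 0 \ Bset m τ with hD
  have hDmeas : MeasurableSet D := (measurable_Bset m 0).diff (measurable_Bset m τ)
  have hmem : ∀ (τ' : ℝ) (y : Euc (m+1)), ψ (φ y) ∈ Bset m τ'
      ↔ y ∈ closedBall (τ' • EuclideanSpace.single (0 : Fin (m+1)) (1:ℝ)) 1 := by
    intro τ' y
    rw [mem_ball_iff_sum]
    have h0 : (ψ (φ y)).1 = y 0 := rfl
    have hj : ∀ j : Fin m, (ψ (φ y)).2 j = y j.succ := by
      intro j
      show (φ y) ((0 : Fin (m+1)).succAbove j) = y j.succ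
      rw [Fin.succAbove_zero]
      rfl
    have hsum2 : ∑ j : Fin m, ((ψ (φ y)).2 j)^2 = ∑ j : Fin m, (y j.succ)^2 :=
      Finset.sum_congr rfl fun j _ => by rw [hj j]
    simp only [Bset, mem_setOf_eq, h0, hsum2]
  have hpre : φ ⁻¹' (ψ ⁻¹' D)
      = closedBall (0 : Euc (m+1)) 1
        \ closedBall (τ • EuclideanSpace.single (0 : Fin (m+1)) (1:ℝ)) 1 := by
    ext y
    simp only [mem_preimage, hD, mem_diff]
    rw [hmem τ y]
    have h0 := hmem 0 y
    rw [zero_smul] at h0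
    rw [h0]
  have step1 : volume (closedBall (0 : Euc (m+1)) 1
        \ closedBall (τ • EuclideanSpace.single (0 : Fin (m+1)) (1:ℝ)) 1)
      = volume D := by
    rw [← hpre]
    rw [(EuclideanSpace.volume_preserving_symm_measurableEquiv_toLp (Fin (m+1))).measure_preimage
      ((ψ.measurableSet_preimage.mpr hDmeas).nullMeasurableSet)]
    exact (volume_preserving_piFinSuccAbove (fun _ : Fin (m+1) => ℝ) 0).measure_preimage
      hDmeas.nullMeasurableSet
  rw [step1]
  have step2 : volume D = ∫⁻ z, volume {t : ℝ | (t, z) ∈ D} := by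
    rw [Measure.volume_eq_prod]
    rw [Measure.prod_apply_symm hDmeas]
    rfl
  rw [step2]
  calc ∫⁻ z, volume {t : ℝ | (t, z) ∈ D}
      ≤ ∫⁻ z, indicator {z : Fin m → ℝ | ∑ j, (z j)^2 ≤ 1} (fun _ => ENNReal.ofReal τ) z :=
        lintegral_mono (slice_bound m τ hτ)
    _ = ENNReal.ofReal τ * volume {z : Fin m → ℝ | ∑ j, (z j)^2 ≤ 1} := by
        rw [lintegral_indicator_const]
        apply measurableSet_le
        · exact Finset.measurable_sum _ fun j _ => ((measurable_pi_apply j).pow_const 2)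
        · exact measurable_const
    _ = ENNReal.ofReal τ * volume (closedBall (0 : Euc m) 1) := by rw [vol_coord_ball]

lemma vol_diff_le (m : ℕ) (p : Euc (m+1)) :
    volume (closedBall (0 : Euc (m+1)) 1 \ closedBall p 1)
      ≤ ENNReal.ofReal ‖p‖ * volume (closedBall (0 : Euc m) 1) := by
  set E := EuclideanSpace.single (0 : Fin (m+1)) (1:ℝ) with hE
  set q : Euc (m+1) := ‖p‖ • E with hq
  have hqnorm : ‖p‖ = ‖q‖ := by
    rw [hq, norm_smul, hE, EuclideanSpace.norm_single]
    simp [abs_of_nonneg (norm_nonneg p)]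
  set T := Submodule.reflection (ℝ ∙ (p - q))ᗮ with hT
  have hTp : T p = q := Submodule.reflection_sub hqnorm
  have hpre1 : T ⁻¹' (closedBall (0 : Euc (m+1)) 1) = closedBall (0 : Euc (m+1)) 1 := by
    ext x
    simp only [mem_preimage, mem_closedBall, dist_zero_right]
    rw [T.norm_map]
  have hpre2 : T ⁻¹' (closedBall q 1) = closedBall p 1 := by
    ext x
    simp only [mem_preimage, mem_closedBall, dist_eq_norm]
    rw [← hTp, ← map_sub, T.norm_map]
  have hmp := (T : Euc (m+1) ≃ₗᵢ[ℝ] Euc (m+1)).measurePreserving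
  have : volume (closedBall (0 : Euc (m+1)) 1 \ closedBall p 1)
      = volume (closedBall (0 : Euc (m+1)) 1 \ closedBall q 1) := by
    calc volume (closedBall (0 : Euc (m+1)) 1 \ closedBall p 1)
        = volume (T ⁻¹' (closedBall (0 : Euc (m+1)) 1 \ closedBall q 1)) := by
          rw [preimage_diff, hpre1, hpre2]
      _ = volume (closedBall (0 : Euc (m+1)) 1 \ closedBall q 1) :=
          hmp.measure_preimage
            ((measurableSet_closedBall.diff measurableSet_closedBall).nullMeasurableSet)
  rw [this, hq]
  exact vol_diff_le_single m ‖p‖ (norm_nonneg p)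

lemma euc_nontrivial (n : ℕ) (hn : 0 < n) : Nontrivial (Euc n) := by
  haveI : Nonempty (Fin n) := ⟨⟨0, hn⟩⟩
  infer_instance

lemma volS_pos (n : ℕ) : 0 < volume (closedBall (0 : Euc n) 1) :=
  measure_closedBall_pos volume _ one_pos

lemma volS_ne_top (n : ℕ) : volume (closedBall (0 : Euc n) 1) ≠ ⊤ :=
  measure_closedBall_lt_top.ne

lemma unifBall_apply_le (n : ℕ) (A : Set (Euc n)) :
    unifBall n A ≤ (volume (closedBall (0 : Euc n) 1))⁻¹ * volume A := by
  rw [unifBall, Measure.smul_apply, smul_eq_mul]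
  exact mul_le_mul_right (Measure.restrict_le_self A) _

lemma unifBall_null (n : ℕ) {A : Set (Euc n)} (hA : volume A = 0) : unifBall n A = 0 := by
  have := unifBall_apply_le n A
  rw [hA, mul_zero] at this
  exact le_antisymm this zero_le

lemma ae_unifBall_of_ae_volume (n : ℕ) {P : Euc n → Prop}
    (h : ∀ᵐ y ∂(volume : Measure (Euc n)), P y) : ∀ᵐ y ∂(unifBall n), P y := by
  rw [ae_iff] at h ⊢
  exact unifBall_null n h

instance unifBall_finite (n : ℕ) : IsFiniteMeasure (unifBall n) := by
  constructor
  rw [unifBall, Measure.smul_apply, Measure.restrict_apply_univ, smul_eq_mul]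
  exact ENNReal.mul_lt_top (ENNReal.inv_lt_top.mpr (volS_pos n)) measure_closedBall_lt_top

lemma integrable_shift (n : ℕ) (δ : ℝ) (f : Euc n → ℝ) (hf : Continuous f) (x : Euc n) :
    Integrable (fun w => f (x + δ • w)) (unifBall n) := by
  rw [unifBall]
  rw [integrable_smul_measure (ENNReal.inv_ne_zero.mpr (volS_ne_top n))
    (ENNReal.inv_ne_top.mpr (volS_pos n).ne')]
  exact ContinuousOn.integrableOn_compact (isCompact_closedBall _ _)
    ((hf.comp (continuous_const.add (continuous_const_smul δ))).continuousOn)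

lemma ballSmooth_eval (n : ℕ) (δ : ℝ) (h : Euc n → ℝ) (x : Euc n) :
    ballSmooth n δ h x
      = ((volume (closedBall (0 : Euc n) 1))⁻¹).toReal
          * ∫ w in closedBall (0 : Euc n) 1, h (x + δ • w) ∂volume := by
  rw [ballSmooth, unifBall, integral_smul_measure, smul_eq_mul]

lemma ballSmooth_lipschitz_aux (m : ℕ) (δ c : ℝ) (hδ : 0 < δ) (hc : 0 ≤ c)
    (g : Euc (m+1) → ℝ) (hg : Continuous g) (hb : ∀ y, |g y| ≤ c) (x y : Euc (m+1)) :
    |ballSmooth (m+1) δ g x - ballSmooth (m+1) δ g y|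
      ≤ (((m:ℝ)+1) * c / δ) * ‖x - y‖ := by
  set S := closedBall (0 : Euc (m+1)) 1 with hS
  set V := volume S with hV
  set W := volume (closedBall (0 : Euc m) 1) with hW
  set p : Euc (m+1) := δ⁻¹ • (y - x) with hp
  set P := closedBall p 1 with hP
  set H : Euc (m+1) → ℝ := fun u => g (x + δ • u) with hH
  have hHc : Continuous H := by
    rw [hH]
    exact hg.comp (continuous_const.add (continuous_const_smul δ))
  have hHb : ∀ u, |H u| ≤ c := by
    intro u
    simp only [hH]
    exact hb _
  -- integrability
  have hIntS : IntegrableOn H S volume :=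
    ContinuousOn.integrableOn_compact (isCompact_closedBall _ _) hHc.continuousOn
  have hIntP : IntegrableOn H P volume :=
    ContinuousOn.integrableOn_compact (isCompact_closedBall _ _) hHc.continuousOn
  -- the substitution for the y-integral
  have hsub : ∀ w : Euc (m+1), g (y + δ • w) = H (w + p) := by
    intro w
    rw [hH]
    congr 1
    rw [hp, smul_add, smul_inv_smul₀ hδ.ne']
    abel
  have evaly : ballSmooth (m+1) δ g y = (V⁻¹).toReal * ∫ u in P, H u ∂volume := by
    rw [ballSmooth_eval, ← hV]
    congr 1
    have e1 : ∫ w in S, g (y + δ • w) ∂volume = ∫ w in S, H (w + p) ∂volume := by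
      apply setIntegral_congr_fun measurableSet_closedBall
      intro w _
      exact hsub w
    have e2 : ∀ w : Euc (m+1), S.indicator (fun w' => H (w' + p)) w
        = P.indicator H (w + p) := by
      intro w
      by_cases hw : w ∈ S
      · rw [indicator_of_mem hw, indicator_of_mem]
        rw [hP, mem_closedBall, dist_eq_norm, add_sub_cancel_right]
        simpa [hS, mem_closedBall, dist_zero_right] using hw
      · rw [indicator_of_notMem hw, indicator_of_notMem]
        intro hcon
        apply hw
        rw [hP, mem_closedBall, dist_eq_norm, add_sub_cancel_right] at hcon
        simpa [hS, mem_closedBall, dist_zero_right] using hcon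
    have e3 : ∫ w in S, H (w + p) ∂volume = ∫ u in P, H u ∂volume := by
      rw [← integral_indicator measurableSet_closedBall,
        ← integral_indicator measurableSet_closedBall]
      calc ∫ w, S.indicator (fun w' => H (w' + p)) w ∂volume
          = ∫ w, P.indicator H (w + p) ∂volume := by
            exact integral_congr_ae (Filter.Eventually.of_forall e2)
        _ = ∫ u, P.indicator H u ∂volume := integral_add_right_eq_self _ p
    rw [e1, e3]
  -- difference of the two set integrals
  have hdiff : ∫ u in S, H u ∂volume - ∫ u in P, H u ∂volume
      = (∫ u in S \ P, H u ∂volume) - ∫ u in P \ S, H u ∂volume := by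
    have d1 : (∫ u in S ∩ P, H u ∂volume) + ∫ u in S \ P, H u ∂volume = ∫ u in S, H u ∂volume :=
      integral_inter_add_diff measurableSet_closedBall hIntS
    have d2 : (∫ u in P ∩ S, H u ∂volume) + ∫ u in P \ S, H u ∂volume = ∫ u in P, H u ∂volume :=
      integral_inter_add_diff measurableSet_closedBall hIntP
    rw [inter_comm] at d2
    linarith [d1, d2]
  -- volume bounds
  have hvol1 : volume (S \ P) ≤ ENNReal.ofReal ‖p‖ * W := vol_diff_le m p
  have hvol2 : volume (P \ S) ≤ ENNReal.ofReal ‖p‖ * W := by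
    have htrans : P \ S = (fun v => v + (-p)) ⁻¹' (S \ closedBall (-p) 1) := by
      ext v
      simp only [mem_preimage, mem_diff, hP, hS, mem_closedBall, dist_eq_norm, dist_zero_right,
        sub_zero]
      constructor
      · rintro ⟨h1, h2⟩
        constructor
        · rw [show v + -p = v - p by abel]
          simpa [dist_eq_norm] using h1
        · rw [show v + -p - -p = v by abel]
          simpa using h2
      · rintro ⟨h1, h2⟩
        constructor
        · rw [show v + -p = v - p by abel] at h1
          simpa [dist_eq_norm] using h1
        · rw [show v + -p - -p = v by abel] at h2
          simpa using h2
    rw [htrans, measure_preimage_add_right]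
    have := vol_diff_le m (-p)
    rwa [norm_neg] at this
  have hWtop : W ≠ ⊤ := volS_ne_top m
  have hvolr1 : (volume (S \ P)).toReal ≤ ‖p‖ * W.toReal := by
    have h := ENNReal.toReal_mono (by
      exact ENNReal.mul_ne_top ENNReal.ofReal_ne_top hWtop) hvol1
    rwa [ENNReal.toReal_mul, ENNReal.toReal_ofReal (norm_nonneg p)] at h
  have hvolr2 : (volume (P \ S)).toReal ≤ ‖p‖ * W.toReal := by
    have h := ENNReal.toReal_mono (by
      exact ENNReal.mul_ne_top ENNReal.ofReal_ne_top hWtop) hvol2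
    rwa [ENNReal.toReal_mul, ENNReal.toReal_ofReal (norm_nonneg p)] at h
  -- put everything together
  have hSfin : volume (S \ P) < ⊤ :=
    lt_of_le_of_lt (measure_mono diff_subset) measure_closedBall_lt_top
  have hPfin : volume (P \ S) < ⊤ :=
    lt_of_le_of_lt (measure_mono diff_subset) measure_closedBall_lt_top
  have hbd1 : ‖∫ u in S \ P, H u ∂volume‖ ≤ c * (volume (S \ P)).toReal :=
    norm_setIntegral_le_of_norm_le_const hSfin (fun u _ => by
      rw [Real.norm_eq_abs]; exact hHb u)
  have hbd2 : ‖∫ u in P \ S, H u ∂volume‖ ≤ c * (volume (P \ S)).toReal :=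
    norm_setIntegral_le_of_norm_le_const hPfin (fun u _ => by
      rw [Real.norm_eq_abs]; exact hHb u)
  have hmain : |(∫ u in S, H u ∂volume) - ∫ u in P, H u ∂volume|
      ≤ 2 * c * (‖p‖ * W.toReal) := by
    rw [hdiff]
    calc |(∫ u in S \ P, H u ∂volume) - ∫ u in P \ S, H u ∂volume|
        ≤ |∫ u in S \ P, H u ∂volume| + |∫ u in P \ S, H u ∂volume| := abs_sub _ _
      _ ≤ c * (volume (S \ P)).toReal + c * (volume (P \ S)).toReal := by
          rw [← Real.norm_eq_abs, ← Real.norm_eq_abs]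
          exact add_le_add hbd1 hbd2
      _ ≤ c * (‖p‖ * W.toReal) + c * (‖p‖ * W.toReal) := by
          have := mul_le_mul_of_nonneg_left hvolr1 hc
          have := mul_le_mul_of_nonneg_left hvolr2 hc
          apply add_le_add <;> exact mul_le_mul_of_nonneg_left (by assumption) hc
      _ = 2 * c * (‖p‖ * W.toReal) := by ring
  have evalx : ballSmooth (m+1) δ g x = (V⁻¹).toReal * ∫ u in S, H u ∂volume := by
    rw [ballSmooth_eval, ← hV]
  have hVpos : 0 < V.toReal := ENNReal.toReal_pos (volS_pos (m+1)).ne' (volS_ne_top (m+1))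
  have hinv : (V⁻¹).toReal = (V.toReal)⁻¹ := by
    rw [ENNReal.toReal_inv]
  have hpn : ‖p‖ = ‖x - y‖ / δ := by
    rw [hp, norm_smul, norm_inv, Real.norm_eq_abs, abs_of_pos hδ, ← norm_neg (y - x)]
    rw [show -(y - x) = x - y by abel]
    ring
  rw [evalx, evaly, ← mul_sub, abs_mul, abs_of_nonneg (by positivity : (0:ℝ) ≤ (V⁻¹).toReal)]
  calc (V⁻¹).toReal * |(∫ u in S, H u ∂volume) - ∫ u in P, H u ∂volume|
      ≤ (V⁻¹).toReal * (2 * c * (‖p‖ * W.toReal)) := by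
        apply mul_le_mul_of_nonneg_left hmain (by positivity)
    _ ≤ (((m:ℝ)+1) * c / δ) * ‖x - y‖ := by
        rw [hinv, hpn]
        rw [div_mul_eq_mul_div, div_mul_eq_mul_div]
        rw [inv_mul_eq_div, div_le_iff₀ hVpos]
        have h2W : 2 * W.toReal ≤ ((m:ℝ)+1) * V.toReal := by
          have := two_vol_le m
          convert this using 2 <;> push_cast <;> ring
        have step : (2 * W.toReal) * (c * ‖x - y‖ / δ)
            ≤ (((m:ℝ)+1) * V.toReal) * (c * ‖x - y‖ / δ) :=
          mul_le_mul_of_nonneg_right h2W (by positivity)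
        calc 2 * c * (‖x - y‖ * W.toReal / δ)
            = (2 * W.toReal) * (c * ‖x - y‖ / δ) := by ring
          _ ≤ (((m:ℝ)+1) * V.toReal) * (c * ‖x - y‖ / δ) := step
          _ = ((m:ℝ)+1) * c * ‖x - y‖ / δ * V.toReal := by ring

lemma hasFDerivAt_ballSmooth (n : ℕ) (δ : ℝ) (hδ : 0 < δ) (h : Euc n → ℝ) (L : ℝ≥0)
    (hlip : LipschitzWith L h) (x₀ : Euc n) :
    HasFDerivAt (ballSmooth n δ h)
      (∫ w, fderiv ℝ h (x₀ + δ • w) ∂(unifBall n)) x₀ := by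
  have key := hasFDerivAt_integral_of_dominated_loc_of_lip
    (F := fun (x : Euc n) (w : Euc n) => h (x + δ • w))
    (F' := fun w => fderiv ℝ h (x₀ + δ • w))
    (μ := unifBall n) (x₀ := x₀) (bound := fun _ => (L : ℝ)) (s := ball x₀ 1) (ball_mem_nhds x₀ one_pos)
    ?_ ?_ ?_ ?_ ?_ ?_
  · exact key.2
  · -- measurability of F x
    apply Filter.Eventually.of_forall
    intro x
    exact ((hlip.continuous.comp
      (continuous_const.add (continuous_const_smul δ)))).aestronglyMeasurable
  · -- integrability of F x₀
    exact integrable_shift n δ h hlip.continuous x₀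
  · -- measurability of F'
    apply Measurable.aestronglyMeasurable
    exact (measurable_fderiv ℝ h).comp
      (continuous_const.add (continuous_const_smul δ)).measurable
  · -- Lipschitz in x
    apply Filter.Eventually.of_forall
    intro w
    have hL : LipschitzWith L (fun x : Euc n => h (x + δ • w)) := by
      apply LipschitzWith.of_dist_le_mul
      intro a b
      calc dist (h (a + δ • w)) (h (b + δ • w)) ≤ L * dist (a + δ • w) (b + δ • w) :=
            hlip.dist_le_mul _ _
        _ = L * dist a b := by rw [dist_add_right]
    have hcoe : Real.nnabs ((L : ℝ)) = L := by
      ext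
      simp [abs_of_nonneg (L.coe_nonneg)]
    rw [hcoe]
    exact hL.lipschitzOnWith
  · -- integrable bound
    exact integrable_const _
  · -- a.e. differentiability
    have hae : ∀ᵐ y ∂(volume : Measure (Euc n)), DifferentiableAt ℝ h y :=
      hlip.ae_differentiableAt
    have hpre : ∀ᵐ w ∂(volume : Measure (Euc n)), DifferentiableAt ℝ h (x₀ + δ • w) := by
      rw [ae_iff] at hae ⊢
      set N := {y : Euc n | ¬ DifferentiableAt ℝ h y} with hN
      have heq : {w : Euc n | ¬ DifferentiableAt ℝ h (x₀ + δ • w)}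
          = (fun w : Euc n => δ • w) ⁻¹' ((fun v : Euc n => x₀ + v) ⁻¹' N) := rfl
      rw [heq]
      have h1 : volume ((fun v : Euc n => x₀ + v) ⁻¹' N) = 0 := by
        rw [measure_preimage_add]
        exact hae
      rw [Measure.addHaar_preimage_smul volume hδ.ne']
      rw [h1, mul_zero]
    have hae2 : ∀ᵐ w ∂(unifBall n), DifferentiableAt ℝ h (x₀ + δ • w) :=
      ae_unifBall_of_ae_volume n hpre
    apply hae2.mono
    intro w hd
    have ht : HasFDerivAt (fun x : Euc n => x + δ • w)
        (ContinuousLinearMap.id ℝ (Euc n)) x₀ := by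
      simpa using (hasFDerivAt_id x₀).add_const (δ • w)
    have := (hd.hasFDerivAt.comp x₀ ht)
    exact this

/-- if `h₁, h₂` are Lipschitz and `|h₁ − h₂| ≤ c` pointwise, then their
uniform-ball smoothings are differentiable with `‖∇h_{1,δ}(x) − ∇h_{2,δ}(x)‖ ≤ nc/δ`. -/
theorem smoothing_gradient_close (n : ℕ) (hn : 0 < n)
    (δ c : ℝ) (hδ : 0 < δ) (hc : 0 ≤ c)
    (h₁ h₂ : Euc n → ℝ) (L₁ L₂ : ℝ≥0)
    (hlip₁ : LipschitzWith L₁ h₁) (hlip₂ : LipschitzWith L₂ h₂)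
    (hclose : ∀ x : Euc n, |h₁ x - h₂ x| ≤ c) :
    Differentiable ℝ (ballSmooth n δ h₁) ∧ Differentiable ℝ (ballSmooth n δ h₂) ∧
    ∀ x : Euc n,
      ‖gradient (ballSmooth n δ h₁) x - gradient (ballSmooth n δ h₂) x‖ ≤ (n : ℝ) * c / δ := by
  have hd1 : ∀ x, DifferentiableAt ℝ (ballSmooth n δ h₁) x :=
    fun x => (hasFDerivAt_ballSmooth n δ hδ h₁ L₁ hlip₁ x).differentiableAt
  have hd2 : ∀ x, DifferentiableAt ℝ (ballSmooth n δ h₂) x :=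
    fun x => (hasFDerivAt_ballSmooth n δ hδ h₂ L₂ hlip₂ x).differentiableAt
  refine ⟨fun x => hd1 x, fun x => hd2 x, ?_⟩
  intro x
  set g : Euc n → ℝ := fun y => h₁ y - h₂ y with hgdef
  have hglip : LipschitzWith (L₁ + L₂) g := hlip₁.sub hlip₂
  have hgb : ∀ y, |g y| ≤ c := fun y => hclose y
  have hfun : (fun y => ballSmooth n δ h₁ y - ballSmooth n δ h₂ y) = ballSmooth n δ g := by
    funext y
    rw [ballSmooth, ballSmooth, ballSmooth,
      ← integral_sub (integrable_shift n δ h₁ hlip₁.continuous y)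
        (integrable_shift n δ h₂ hlip₂.continuous y)]
  have hK : (0:ℝ) ≤ (n:ℝ) * c / δ := by positivity
  have hlipg : LipschitzWith (Real.toNNReal ((n:ℝ) * c / δ)) (ballSmooth n δ g) := by
    apply LipschitzWith.of_dist_le_mul
    intro a b
    obtain ⟨m, rfl⟩ : ∃ m, n = m + 1 := ⟨n - 1, (Nat.succ_pred_eq_of_pos hn).symm⟩
    rw [Real.dist_eq, dist_eq_norm, Real.coe_toNNReal _ hK]
    have := ballSmooth_lipschitz_aux m δ c hδ hc g hglip.continuous hgb a b
    convert this using 3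
    push_cast
    ring
  -- gradient difference
  have hgrad : gradient (ballSmooth n δ h₁) x - gradient (ballSmooth n δ h₂) x
      = (InnerProductSpace.toDual ℝ (Euc n)).symm
          (fderiv ℝ (ballSmooth n δ h₁) x - fderiv ℝ (ballSmooth n δ h₂) x) := by
    rw [gradient, gradient, map_sub]
  rw [hgrad, LinearIsometryEquiv.norm_map]
  have e1 : fderiv ℝ (ballSmooth n δ h₁) x - fderiv ℝ (ballSmooth n δ h₂) x
      = fderiv ℝ (ballSmooth n δ g) x := by
    have h12 : HasFDerivAt (fun y => ballSmooth n δ h₁ y - ballSmooth n δ h₂ y)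
        (fderiv ℝ (ballSmooth n δ h₁) x - fderiv ℝ (ballSmooth n δ h₂) x) x :=
      ((hd1 x).hasFDerivAt).sub ((hd2 x).hasFDerivAt)
    rw [hfun] at h12
    exact (h12.fderiv).symm
  rw [e1]
  have hg := hasFDerivAt_ballSmooth n δ hδ g (L₁ + L₂) hglip x
  rw [hg.fderiv]
  have := hg.le_of_lipschitz hlipg
  rwa [Real.coe_toNNReal _ hK] at this
end
end

section
/- Let X ⊆ ℝ^{d_x} and Y ⊆ ℝ^{d_y} be nonempty closed convex sets and let f : ℝ^{d_x} × ℝ^{d_y} → ℝ be differentiable with M-Lipschitz gradient (M > 0). Fix x ∈ X, y ∈ Y, vectors u ∈ ℝ^{d_x}, v ∈ ℝ^{d_y}, and step sizes η_x, η_y > 0. Define x⁺ = Π_X(x − η_x u), y⁺ = Π_Y(y + η_y v), ũ = (x − x⁺)/η_x, and ṽ = (y⁺ − y)/η_y. Then: −f(x⁺, y⁺) ≤ −f(x, y) + η_x ⟨u, ũ⟩ + ( η_x² M/2 + η_x² η_y M² + η_x²/(2η_y) )·‖ũ‖² + (η_y/2)·‖∇_x f(x,y) − u‖² − ( η_y/4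 − η_y² M/2 )·‖ṽ‖² + (η_y/2)·‖∇_y f(x,y) − v‖². -/
open Set
open scoped RealInnerProductSpace

noncomputable section

section Helpers

variable {F : Type*} [NormedAddCommGroup F] [InnerProductSpace ℝ F] [CompleteSpace F]

/-- Descent lemma: quadratic upper bound for a function whose gradient is
Lipschitz relative to the base point. -/
lemma my_descent (g : F → ℝ) (g' : F → F)
    (hg : ∀ p, HasGradientAt g (g' p) p) (a b : F) (L : ℝ)
    (hlip : ∀ p, ‖g' p - g' a‖ ≤ L * ‖p - a‖) :
    g b ≤ g a + ⟪g' a, b - a⟫ + L / 2 * ‖b - a‖ ^ 2 := by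
  set d := b - a with hd
  have hline : ∀ t : ℝ, HasDerivAt (fun t : ℝ => a + t • d) d t := by
    intro t
    simpa using (HasDerivAt.smul_const (hasDerivAt_id t) d).const_add a
  have hφ : ∀ t : ℝ, HasDerivAt (fun t : ℝ => g (a + t • d)) ⟪g' (a + t • d), d⟫ t := by
    intro t
    have := (hg (a + t • d)).hasFDerivAt.comp_hasDerivAt t (hline t)
    simp at this
    exact this
  set ψ : ℝ → ℝ := fun t => g (a + t • d) - t * ⟪g' a, d⟫ - L * t ^ 2 / 2 * ‖d‖ ^ 2 with hψ
  have hψd : ∀ t : ℝ, HasDerivAt ψ (⟪g' (a + t • d), d⟫ - ⟪g' a, d⟫ - L * t * ‖d‖ ^ 2) t := by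
    intro t
    have h1 : HasDerivAt (fun t : ℝ => t * ⟪g' a, d⟫) ⟪g' a, d⟫ t := by
      simpa using (hasDerivAt_id t).mul_const ⟪g' a, d⟫
    have h2 : HasDerivAt (fun t : ℝ => L * t ^ 2 / 2 * ‖d‖ ^ 2) (L * t * ‖d‖ ^ 2) t := by
      have : HasDerivAt (fun t : ℝ => L * t ^ 2 / 2 * ‖d‖ ^ 2)
          (L * ((2 : ℕ) * t ^ (2 - 1)) / 2 * ‖d‖ ^ 2) t :=
        (((hasDerivAt_pow 2 t).const_mul L).div_const 2).mul_const _
      convert this using 1; push_cast; ring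
    exact ((hφ t).sub h1).sub h2
  have hmono : AntitoneOn ψ (Icc (0:ℝ) 1) := by
    apply antitoneOn_of_deriv_nonpos (convex_Icc 0 1)
    · have : Differentiable ℝ ψ := fun t => (hψd t).differentiableAt
      exact this.continuous.continuousOn
    · intro t _
      exact ((hψd t).differentiableAt).differentiableWithinAt
    · intro t ht
      rw [interior_Icc] at ht
      rw [(hψd t).deriv]
      have h1 : ⟪g' (a + t • d) - g' a, d⟫ ≤ ‖g' (a + t • d) - g' a‖ * ‖d‖ :=
        real_inner_le_norm _ _
      have h2 : ‖g' (a + t • d) - g' a‖ ≤ L * (t * ‖d‖) := by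
        have := hlip (a + t • d)
        simpa [norm_smul, abs_of_pos ht.1, mul_assoc] using this
      have h3 : ⟪g' (a + t • d), d⟫ - ⟪g' a, d⟫ = ⟪g' (a + t • d) - g' a, d⟫ := by
        rw [inner_sub_left]
      rw [h3]
      nlinarith [norm_nonneg d, norm_nonneg (g' (a + t • d) - g' a), ht.1.le]
  have := hmono (left_mem_Icc.mpr zero_le_one) (right_mem_Icc.mpr zero_le_one) zero_le_one
  simp only [hψ] at this
  have e0 : a + (0:ℝ) • d = a := by simp
  have e1 : a + (1:ℝ) • d = b := by simp [hd]
  rw [e0, e1] at this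
  nlinarith [this]

/-- Variational characterization of the metric projection onto a convex set. -/
lemma my_proj_var {K : Set F} (hK : Convex ℝ K) (proj : F → F)
    (hproj : ∀ z, proj z ∈ K ∧ ∀ w ∈ K, ‖z - proj z‖ ≤ ‖z - w‖)
    (z w : F) (hw : w ∈ K) : ⟪z - proj z, w - proj z⟫ ≤ 0 := by
  have hne : Nonempty K := ⟨⟨proj z, (hproj z).1⟩⟩
  have heq : ‖z - proj z‖ = ⨅ w : K, ‖z - w‖ := by
    apply le_antisymm
    · exact le_ciInf fun w => (hproj z).2 w w.2
    · have hbdd : BddBelow (Set.range fun w : K => ‖z - (w : F)‖) := by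
        refine ⟨0, ?_⟩
        rintro r ⟨w, rfl⟩
        exact norm_nonneg _
      exact ciInf_le hbdd ⟨proj z, (hproj z).1⟩
  exact ((norm_eq_iInf_iff_real_inner_le_zero hK (hproj z).1).1 heq) w hw

/-- Negating a function negates its gradient. -/
lemma my_grad_neg {g : F → ℝ} {g' p : F} (h : HasGradientAt g g' p) :
    HasGradientAt (fun q => -(g q)) (-g') p := by
  have h2 := h.hasFDerivAt.neg
  have := h2.hasGradientAt
  simp [map_neg] at this
  exact this

end Helpers

set_option maxHeartbeats 1000000 in
/-- one-step descent-ascent inequality for a smooth objective with `M`-Lipschitz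
gradient. With `x⁺ = Π_X(x − η_x u)`, `y⁺ = Π_Y(y + η_y v)`, `ũ = (x − x⁺)/η_x`,
`ṽ = (y⁺ − y)/η_y`:
`−f(x⁺,y⁺) ≤ −f(x,y) + η_x⟨u,ũ⟩ + (η_x²M/2 + η_x²η_yM² + η_x²/(2η_y))‖ũ‖²
  + (η_y/2)‖∇_xf(x,y) − u‖² − (η_y/4 − η_y²M/2)‖ṽ‖² + (η_y/2)‖∇_yf(x,y) − v‖²`. -/
theorem descent_ascent_step (dx dy : ℕ)
    (X : Set (Euc dx)) (hXne : X.Nonempty) (hXcl : IsClosed X) (hXconv : Convex ℝ X)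
    (Y : Set (Euc dy)) (hYne : Y.Nonempty) (hYcl : IsClosed Y) (hYconv : Convex ℝ Y)
    (M : ℝ) (hM : 0 < M)
    (f : Euc dx → Euc dy → ℝ)
    (fx : Euc dx → Euc dy → Euc dx) (fy : Euc dx → Euc dy → Euc dy)
    (hfx : ∀ x y, HasGradientAt (fun x' => f x' y) (fx x y) x)
    (hfy : ∀ x y, HasGradientAt (fun y' => f x y') (fy x y) y)
    (hgradlip : ∀ x₁ x₂ : Euc dx, ∀ y₁ y₂ : Euc dy,
      Real.sqrt (‖fx x₁ y₁ - fx x₂ y₂‖ ^ 2 + ‖fy x₁ y₁ - fy x₂ y₂‖ ^ 2)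
        ≤ M * Real.sqrt (‖x₁ - x₂‖ ^ 2 + ‖y₁ - y₂‖ ^ 2))
    (projX : Euc dx → Euc dx)
    (hprojX : ∀ z, projX z ∈ X ∧ ∀ w ∈ X, ‖z - projX z‖ ≤ ‖z - w‖)
    (projY : Euc dy → Euc dy)
    (hprojY : ∀ z, projY z ∈ Y ∧ ∀ w ∈ Y, ‖z - projY z‖ ≤ ‖z - w‖)
    (x : Euc dx) (hx : x ∈ X) (y : Euc dy) (hy : y ∈ Y)
    (u : Euc dx) (v : Euc dy) (ηx ηy : ℝ) (hηx : 0 < ηx) (hηy : 0 < ηy) :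
    -f (projX (x - ηx • u)) (projY (y + ηy • v)) ≤
      -f x y + ηx * ⟪u, ηx⁻¹ • (x - projX (x - ηx • u))⟫ +
        (ηx ^ 2 * M / 2 + ηx ^ 2 * ηy * M ^ 2 + ηx ^ 2 / (2 * ηy)) *
          ‖ηx⁻¹ • (x - projX (x - ηx • u))‖ ^ 2 +
        ηy / 2 * ‖fx x y - u‖ ^ 2 -
        (ηy / 4 - ηy ^ 2 * M / 2) * ‖ηy⁻¹ • (projY (y + ηy • v) - y)‖ ^ 2 +
        ηy / 2 * ‖fy x y - v‖ ^ 2 := by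
  -- Lipschitz consequences of the joint gradient Lipschitz bound
  have sqrt_self : ∀ r : ℝ, 0 ≤ r → Real.sqrt (r ^ 2) = r := fun r hr => Real.sqrt_sq hr
  have hfx_x : ∀ (x₁ x₂ : Euc dx) (y0 : Euc dy), ‖fx x₁ y0 - fx x₂ y0‖ ≤ M * ‖x₁ - x₂‖ := by
    intro x₁ x₂ y0
    have h := hgradlip x₁ x₂ y0 y0
    have h1 : ‖fx x₁ y0 - fx x₂ y0‖
        ≤ Real.sqrt (‖fx x₁ y0 - fx x₂ y0‖ ^ 2 + ‖fy x₁ y0 - fy x₂ y0‖ ^ 2) := by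
      calc ‖fx x₁ y0 - fx x₂ y0‖ = Real.sqrt (‖fx x₁ y0 - fx x₂ y0‖ ^ 2) :=
            (sqrt_self _ (norm_nonneg _)).symm
        _ ≤ _ := Real.sqrt_le_sqrt (le_add_of_nonneg_right (by positivity))
    have h2 : Real.sqrt (‖x₁ - x₂‖ ^ 2 + ‖y0 - y0‖ ^ 2) = ‖x₁ - x₂‖ := by
      rw [show ‖y0 - y0‖ = 0 by simp]
      rw [show ‖x₁ - x₂‖ ^ 2 + (0:ℝ) ^ 2 = ‖x₁ - x₂‖ ^ 2 by ring]
      exact sqrt_self _ (norm_nonneg _)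
    calc ‖fx x₁ y0 - fx x₂ y0‖ ≤ _ := h1
      _ ≤ M * Real.sqrt (‖x₁ - x₂‖ ^ 2 + ‖y0 - y0‖ ^ 2) := h
      _ = M * ‖x₁ - x₂‖ := by rw [h2]
  have hfx_y : ∀ (x0 : Euc dx) (y₁ y₂ : Euc dy), ‖fx x0 y₁ - fx x0 y₂‖ ≤ M * ‖y₁ - y₂‖ := by
    intro x0 y₁ y₂
    have h := hgradlip x0 x0 y₁ y₂
    have h1 : ‖fx x0 y₁ - fx x0 y₂‖
        ≤ Real.sqrt (‖fx x0 y₁ - fx x0 y₂‖ ^ 2 + ‖fy x0 y₁ - fy x0 y₂‖ ^ 2) := by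
      calc ‖fx x0 y₁ - fx x0 y₂‖ = Real.sqrt (‖fx x0 y₁ - fx x0 y₂‖ ^ 2) :=
            (sqrt_self _ (norm_nonneg _)).symm
        _ ≤ _ := Real.sqrt_le_sqrt (le_add_of_nonneg_right (by positivity))
    have h2 : Real.sqrt (‖x0 - x0‖ ^ 2 + ‖y₁ - y₂‖ ^ 2) = ‖y₁ - y₂‖ := by
      rw [show ‖x0 - x0‖ = 0 by simp]
      rw [show (0:ℝ) ^ 2 + ‖y₁ - y₂‖ ^ 2 = ‖y₁ - y₂‖ ^ 2 by ring]
      exact sqrt_self _ (norm_nonneg _)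
    calc ‖fx x0 y₁ - fx x0 y₂‖ ≤ _ := h1
      _ ≤ M * Real.sqrt (‖x0 - x0‖ ^ 2 + ‖y₁ - y₂‖ ^ 2) := h
      _ = M * ‖y₁ - y₂‖ := by rw [h2]
  have hfy_y : ∀ (x0 : Euc dx) (y₁ y₂ : Euc dy), ‖fy x0 y₁ - fy x0 y₂‖ ≤ M * ‖y₁ - y₂‖ := by
    intro x0 y₁ y₂
    have h := hgradlip x0 x0 y₁ y₂
    have h1 : ‖fy x0 y₁ - fy x0 y₂‖
        ≤ Real.sqrt (‖fx x0 y₁ - fx x0 y₂‖ ^ 2 + ‖fy x0 y₁ - fy x0 y₂‖ ^ 2) := by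
      calc ‖fy x0 y₁ - fy x0 y₂‖ = Real.sqrt (‖fy x0 y₁ - fy x0 y₂‖ ^ 2) :=
            (sqrt_self _ (norm_nonneg _)).symm
        _ ≤ _ := Real.sqrt_le_sqrt (le_add_of_nonneg_left (by positivity))
    have h2 : Real.sqrt (‖x0 - x0‖ ^ 2 + ‖y₁ - y₂‖ ^ 2) = ‖y₁ - y₂‖ := by
      rw [show ‖x0 - x0‖ = 0 by simp]
      rw [show (0:ℝ) ^ 2 + ‖y₁ - y₂‖ ^ 2 = ‖y₁ - y₂‖ ^ 2 by ring]
      exact sqrt_self _ (norm_nonneg _)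
    calc ‖fy x0 y₁ - fy x0 y₂‖ ≤ _ := h1
      _ ≤ M * Real.sqrt (‖x0 - x0‖ ^ 2 + ‖y₁ - y₂‖ ^ 2) := h
      _ = M * ‖y₁ - y₂‖ := by rw [h2]
  set xp := projX (x - ηx • u) with hxpdef
  set yp := projY (y + ηy • v) with hypdef
  set ut := ηx⁻¹ • (x - xp) with hutdef
  set vt := ηy⁻¹ • (yp - y) with hvtdef
  have hxe : x - xp = ηx • ut := (smul_inv_smul₀ hηx.ne' (x - xp)).symm
  have hye : yp - y = ηy • vt := (smul_inv_smul₀ hηy.ne' (yp - y)).symm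
  have hPv := my_proj_var hYconv projY hprojY (y + ηy • v) y hy
  rw [← hypdef] at hPv
  clear_value xp yp ut vt
  have nxp : ‖xp - x‖ = ηx * ‖ut‖ := by
    rw [norm_sub_rev, hxe, norm_smul, Real.norm_eq_abs, abs_of_pos hηx]
  have nyp : ‖yp - y‖ = ηy * ‖vt‖ := by
    rw [hye, norm_smul, Real.norm_eq_abs, abs_of_pos hηy]
  -- descent lemma in y at fixed x
  have sA : -(f x yp) ≤ -(f x y) + ⟪-(fy x y), yp - y⟫ + M / 2 * ‖yp - y‖ ^ 2 := by
    apply my_descent (fun y' => -(f x y')) (fun p => -(fy x p))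
      (fun p => my_grad_neg (hfy x p)) y yp M
    intro p
    rw [neg_sub_neg, norm_sub_rev]
    exact hfy_y x p y
  -- descent lemma in x at fixed yp
  have sB : -(f xp yp) ≤ -(f x yp) + ⟪-(fx x yp), xp - x⟫ + M / 2 * ‖xp - x‖ ^ 2 := by
    apply my_descent (fun x' => -(f x' yp)) (fun p => -(fx p yp))
      (fun p => my_grad_neg (hfx p yp)) x xp M
    intro p
    rw [neg_sub_neg, norm_sub_rev]
    exact hfx_x p x yp
  -- inner product decompositions
  have E1 : ⟪-(fx x yp), xp - x⟫
      = ηx * ⟪u, ut⟫ + ηx * ⟪fx x yp - fx x y, ut⟫ + ηx * ⟪fx x y - u, ut⟫ := by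
    have hxp2 : xp - x = -(ηx • ut) := by rw [← hxe]; abel
    rw [hxp2, inner_neg_neg, real_inner_smul_right]
    simp only [inner_sub_left]
    ring
  have E2 : ⟪-(fy x y), yp - y⟫ = -(ηy * ⟪v, vt⟫) - ηy * ⟪fy x y - v, vt⟫ := by
    rw [hye, inner_neg_left, real_inner_smul_right]
    simp only [inner_sub_left]
    ring
  -- projection variational inequality: ⟪v, vt⟫ ≥ ‖vt‖²
  have b3 : ‖vt‖ ^ 2 ≤ ⟪v, vt⟫ := by
    have e1 : (y + ηy • v) - yp = ηy • (v - vt) := by rw [smul_sub, ← hye]; abel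
    have e2 : y - yp = -(ηy • vt) := by rw [← hye]; abel
    rw [e1, e2, inner_neg_right, real_inner_smul_left, real_inner_smul_right] at hPv
    have h0 : (0:ℝ) ≤ ⟪v - vt, vt⟫ := by nlinarith [hPv, mul_pos hηy hηy]
    have h1' : ⟪v - vt, vt⟫ = ⟪v, vt⟫ - ⟪vt, vt⟫ := inner_sub_left _ _ _
    have h2' : ⟪vt, vt⟫ = ‖vt‖ ^ 2 := real_inner_self_eq_norm_sq _
    linarith
  -- bound h1
  have h1 : ηx * ⟪fx x yp - fx x y, ut⟫
      ≤ ηx ^ 2 * ηy * M ^ 2 * ‖ut‖ ^ 2 + ηy / 4 * ‖vt‖ ^ 2 := by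
    have i1 : ⟪fx x yp - fx x y, ut⟫ ≤ M * (ηy * ‖vt‖) * ‖ut‖ := by
      have hΔ : ‖fx x yp - fx x y‖ ≤ M * (ηy * ‖vt‖) := by
        have := hfx_y x yp y
        rwa [← nyp]
      calc ⟪fx x yp - fx x y, ut⟫ ≤ ‖fx x yp - fx x y‖ * ‖ut‖ := real_inner_le_norm _ _
        _ ≤ M * (ηy * ‖vt‖) * ‖ut‖ := mul_le_mul_of_nonneg_right hΔ (norm_nonneg _)
    have i2 := mul_le_mul_of_nonneg_left i1 hηx.le
    nlinarith [i2, mul_nonneg hηy.le (sq_nonneg (2 * ηx * M * ‖ut‖ - ‖vt‖))]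
  -- bound h2
  have h2 : ηx * ⟪fx x y - u, ut⟫
      ≤ ηy / 2 * ‖fx x y - u‖ ^ 2 + ηx ^ 2 / (2 * ηy) * ‖ut‖ ^ 2 := by
    have i1 : ⟪fx x y - u, ut⟫ ≤ ‖fx x y - u‖ * ‖ut‖ := real_inner_le_norm _ _
    have i2 := mul_le_mul_of_nonneg_left i1 hηx.le
    have key : ηy / 2 * ‖fx x y - u‖ ^ 2 + ηx ^ 2 / (2 * ηy) * ‖ut‖ ^ 2
        - ηx * (‖fx x y - u‖ * ‖ut‖) = (ηy * ‖fx x y - u‖ - ηx * ‖ut‖) ^ 2 / (2 * ηy) := by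
      field_simp
      ring
    have knn : (0:ℝ) ≤ (ηy * ‖fx x y - u‖ - ηx * ‖ut‖) ^ 2 / (2 * ηy) :=
      div_nonneg (sq_nonneg _) (by linarith)
    linarith [i2, key ▸ knn]
  -- bound h3
  have h3 : -(ηy * ⟪v, vt⟫) ≤ -(ηy * ‖vt‖ ^ 2) := by
    have := mul_le_mul_of_nonneg_left b3 hηy.le
    linarith
  -- bound h4
  have h4 : -(ηy * ⟪fy x y - v, vt⟫) ≤ ηy / 2 * ‖fy x y - v‖ ^ 2 + ηy / 2 * ‖vt‖ ^ 2 := by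
    have i1 : -⟪fy x y - v, vt⟫ ≤ ‖fy x y - v‖ * ‖vt‖ := by
      have := real_inner_le_norm (-(fy x y - v)) vt
      rwa [inner_neg_left, norm_neg] at this
    have i2 := mul_le_mul_of_nonneg_left i1 hηy.le
    nlinarith [i2, mul_nonneg hηy.le (sq_nonneg (‖fy x y - v‖ - ‖vt‖))]
  -- combine
  rw [E1] at sB
  rw [E2] at sA
  rw [nxp] at sB
  rw [nyp] at sA
  linarith [sA, sB, h1, h2, h3, h4]
end
end
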